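/- arXiv:2502.02898 — 4 statements merged into one kernel-verified Lean document; each statement's English description precedes it below -/
import Mathlib

section
/- Let f be in the class BT_B with Taylor coefficients a_n, and let γ_1 = a_2/2, γ_2 = (1/2)(a_3 − a_2²/2) be its first two logarithmic coefficients. Then |γ_2| − |γ_1| ≤ 1/12. -/
open Complex Metric

/-- Principal branch of the square root: `w^(1/2) = exp((1/2) * Log w)`. -/
noncomputable def psqrt (w : ℂ) : ℂ := Complex.exp ((1/2 : ℂ) * Complex.log w)

/-- The `n`-th Taylor coefficient of `f` at `0`, i.e. `f^(n)(0)/n!`. -/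
noncomputable def tCoeff (f : ℂ → ℂ) (n : ℕ) : ℂ := iteratedDeriv n f 0 / n.factorial

/-- The class `BT_B` of bounded turning functions associated with the bean-shaped domain:
`f` is analytic on the unit disk, `f 0 = 0`, `f' 0 = 1`, `f` injective on the disk,
and `f'(z) = (1 + tanh (ω z))^(1/2)` for a Schwarz function `ω`. -/
def IsBTB (f : ℂ → ℂ) : Prop :=
  AnalyticOnNhd ℂ f (ball 0 1) ∧ f 0 = 0 ∧ deriv f 0 = 1 ∧
  Set.InjOn f (ball 0 1) ∧
  ∃ ω : ℂ → ℂ, AnalyticOnNhd ℂ ω (ball 0 1) ∧ ω 0 = 0 ∧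
    (∀ z ∈ ball (0:ℂ) 1, ‖ω z‖ < 1) ∧
    (∀ z ∈ ball (0:ℂ) 1, deriv f z = psqrt (1 + Complex.tanh (ω z)))

/-- Cauchy estimate: an analytic function bounded by 1 on the unit disk has
`‖f⁽ⁿ⁾(0)‖ ≤ n!`. -/
lemma cauchy_bound {g : ℂ → ℂ} (hg : DifferentiableOn ℂ g (ball 0 1))
    (hb : ∀ z ∈ ball (0:ℂ) 1, ‖g z‖ ≤ 1) (n : ℕ) :
    ‖iteratedDeriv n g 0‖ ≤ n.factorial := by
  have key : ∀ r : ℝ, 0 < r → r < 1 →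
      ‖iteratedDeriv n g 0‖ ≤ n.factorial * r⁻¹ ^ n := by
    intro r hr0 hr1
    set R : NNReal := ⟨r, hr0.le⟩ with hR
    have hsub : closedBall (0:ℂ) R ⊆ ball 0 1 := closedBall_subset_ball (by exact hr1)
    have hd : DifferentiableOn ℂ g (closedBall 0 R) := hg.mono hsub
    have hp := hd.hasFPowerSeriesOnBall (show 0 < R by exact NNReal.coe_pos.mp hr0)
    set p := cauchyPowerSeries g 0 R with hpdef
    have h1 : n.factorial • p n (fun _ ↦ (1:ℂ)) = iteratedFDeriv ℂ n g 0 (fun _ ↦ (1:ℂ)) :=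
      hp.factorial_smul (1:ℂ) n
    have h2 : iteratedDeriv n g 0 = iteratedFDeriv ℂ n g 0 (fun _ ↦ (1:ℂ)) :=
      iteratedDeriv_eq_iteratedFDeriv ..
    have h3 : ‖iteratedDeriv n g 0‖ = n.factorial * ‖p n (fun _ ↦ (1:ℂ))‖ := by
      rw [h2, ← h1]; simp [norm_smul]
    rw [h3]
    have h4 : ‖p n (fun _ ↦ (1:ℂ))‖ ≤ ‖p n‖ := by
      simpa using (p n).le_opNorm (fun _ ↦ (1:ℂ))
    have h5 : ‖p n‖ ≤ ((2 * Real.pi)⁻¹ * ∫ θ : ℝ in (0)..2 * Real.pi,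
        ‖g (circleMap 0 R θ)‖) * |(R:ℝ)|⁻¹ ^ n := norm_cauchyPowerSeries_le g 0 R n
    have hint : (∫ θ : ℝ in (0)..2 * Real.pi, ‖g (circleMap 0 R θ)‖) ≤ 2 * Real.pi := by
      have := intervalIntegral.norm_integral_le_of_norm_le_const
        (C := 1) (a := (0:ℝ)) (b := 2 * Real.pi) (f := fun θ => ‖g (circleMap 0 R θ)‖) ?_
      · calc (∫ θ : ℝ in (0)..2 * Real.pi, ‖g (circleMap 0 R θ)‖)
            ≤ ‖∫ θ : ℝ in (0)..2 * Real.pi, ‖g (circleMap 0 R θ)‖‖ := le_abs_self _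
          _ ≤ 1 * |2 * Real.pi - 0| := this
          _ = 2 * Real.pi := by rw [one_mul, sub_zero, abs_of_pos Real.two_pi_pos]
      · intro θ _
        have hm : circleMap 0 R θ ∈ ball (0:ℂ) 1 := by
          simp only [mem_ball, dist_zero_right]
          rw [norm_circleMap_zero]
          exact (abs_of_pos hr0).trans_lt hr1
        simpa using hb _ hm
    have h6 : ((2 * Real.pi)⁻¹ * ∫ θ : ℝ in (0)..2 * Real.pi, ‖g (circleMap 0 R θ)‖) ≤ 1 := by
      rw [inv_mul_le_iff₀ Real.two_pi_pos]; linarith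
    have hxnn : (0:ℝ) ≤ |(R:ℝ)|⁻¹ ^ n := pow_nonneg (inv_nonneg.mpr (abs_nonneg _)) n
    have hpn : ‖p n‖ ≤ |(R:ℝ)|⁻¹ ^ n := h5.trans (mul_le_of_le_one_left hxnn h6)
    have : |(R:ℝ)| = r := by exact abs_of_pos hr0
    calc (n.factorial : ℝ) * ‖p n (fun _ ↦ (1:ℂ))‖ ≤ n.factorial * ‖p n‖ := by
          gcongr
      _ ≤ n.factorial * |(R:ℝ)|⁻¹ ^ n := by gcongr
      _ = n.factorial * r⁻¹ ^ n := by rw [this]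
  have ht : Filter.Tendsto (fun r : ℝ => (n.factorial : ℝ) * r⁻¹ ^ n) (nhdsWithin 1 (Set.Iio 1))
      (nhds (n.factorial)) := by
    have : Filter.Tendsto (fun r : ℝ => (n.factorial : ℝ) * r⁻¹ ^ n) (nhds 1)
        (nhds ((n.factorial : ℝ) * (1:ℝ)⁻¹ ^ n)) := by
      apply Filter.Tendsto.const_mul
      exact ((continuousAt_inv₀ one_ne_zero).pow n).tendsto
    simpa using this.mono_left nhdsWithin_le_nhds
  refine ge_of_tendsto ht ?_
  filter_upwards [Ioo_mem_nhdsLT_of_mem (show (1:ℝ) ∈ Set.Ioc 0 1 by norm_num)] with r hr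
  exact key r hr.1 hr.2

/-- The second and third Taylor coefficients of `f` in terms of the Schwarz function. -/
lemma coeff_formulas {f ω : ℂ → ℂ} (hωa : AnalyticOnNhd ℂ ω (ball 0 1)) (hω0 : ω 0 = 0)
    (hfg : ∀ z ∈ ball (0:ℂ) 1, deriv f z = psqrt (1 + Complex.tanh (ω z))) :
    iteratedDeriv 2 f 0 = deriv ω 0 / 2 ∧
    iteratedDeriv 3 f 0 = iteratedDeriv 2 ω 0 / 2 - (deriv ω 0)^2 / 4 := by
  have h01 : (0:ℂ) ∈ ball (0:ℂ) 1 := mem_ball_self one_pos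
  have hcω : ContinuousAt ω 0 := (hωa 0 h01).continuousAt
  have hccosh : ContinuousAt (fun z => Complex.cosh (ω z)) 0 :=
    Complex.continuous_cosh.continuousAt.comp hcω
  have hcsinh : ContinuousAt (fun z => Complex.sinh (ω z)) 0 :=
    Complex.continuous_sinh.continuousAt.comp hcω
  have hcosh0 : Complex.cosh (ω 0) = 1 := by simp [hω0]
  have ev1 : ∀ᶠ z in nhds (0:ℂ), Complex.cosh (ω z) ≠ 0 := by
    apply hccosh.eventually_ne
    simp [hcosh0]
  have hF : ContinuousAt (fun z => Complex.sinh (ω z) / Complex.cosh (ω z)) 0 :=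
    hcsinh.div hccosh (by simp [hcosh0])
  have ev2 : ∀ᶠ z in nhds (0:ℂ),
      Complex.sinh (ω z) / Complex.cosh (ω z) ∈ ball (0:ℂ) (1/2) := by
    apply hF.eventually_mem
    have : Complex.sinh (ω 0) / Complex.cosh (ω 0) = 0 := by simp [hω0]
    rw [this]
    exact ball_mem_nhds _ (by norm_num)
  have ev3 : ∀ᶠ z in nhds (0:ℂ), z ∈ ball (0:ℂ) 1 := isOpen_ball.mem_nhds h01
  obtain ⟨r, hr0, hrb⟩ := Metric.eventually_nhds_iff_ball.mp ((ev1.and ev2).and ev3)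
  have hfacts : ∀ z ∈ ball (0:ℂ) r, Complex.cosh (ω z) ≠ 0 ∧
      (1 + Complex.sinh (ω z) / Complex.cosh (ω z)) ∈ Complex.slitPlane ∧
      (1 + Complex.sinh (ω z) / Complex.cosh (ω z)) ≠ 0 ∧ z ∈ ball (0:ℂ) 1 := by
    intro z hz
    obtain ⟨⟨h1, h2⟩, h3⟩ := hrb z hz
    have habs : ‖Complex.sinh (ω z) / Complex.cosh (ω z)‖ < 1/2 := by
      simpa [mem_ball, dist_zero_right] using h2
    have hre : (0:ℝ) < (1 + Complex.sinh (ω z) / Complex.cosh (ω z)).re := by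
      set q := Complex.sinh (ω z) / Complex.cosh (ω z)
      have h4 : |q.re| ≤ ‖q‖ := Complex.abs_re_le_norm q
      have : (1 + q).re = 1 + q.re := by simp
      rw [this]
      have := abs_le.mp h4
      linarith
    refine ⟨h1, Or.inl hre, ?_, h3⟩
    intro hzero
    rw [hzero] at hre; simp at hre
  set q : ℂ → ℂ := fun z => Complex.sinh (ω z) / Complex.cosh (ω z) with hq
  set N : ℂ → ℂ := fun z => Complex.cosh (ω z) * deriv ω z * Complex.cosh (ω z) -
      Complex.sinh (ω z) * (Complex.sinh (ω z) * deriv ω z) with hN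
  set D : ℂ → ℂ := fun z => psqrt (1 + q z) *
      ((1/2 : ℂ) * (N z / Complex.cosh (ω z) ^ 2 / (1 + q z))) with hD
  have keyA : ∀ z ∈ ball (0:ℂ) r, HasDerivAt (fun w => psqrt (1 + q w)) (D z) z := by
    intro z hz
    obtain ⟨hc0, hslit, hne, hz1⟩ := hfacts z hz
    have hω' : HasDerivAt ω (deriv ω z) z := (hωa z hz1).differentiableAt.hasDerivAt
    have hs : HasDerivAt (fun w => Complex.sinh (ω w)) (Complex.cosh (ω z) * deriv ω z) z :=
      (Complex.hasDerivAt_sinh (ω z)).comp z hω'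
    have hc : HasDerivAt (fun w => Complex.cosh (ω w)) (Complex.sinh (ω z) * deriv ω z) z :=
      (Complex.hasDerivAt_cosh (ω z)).comp z hω'
    have hqd : HasDerivAt q (N z / Complex.cosh (ω z) ^ 2) z := hs.div hc hc0
    have h1q : HasDerivAt (fun w => 1 + q w) (N z / Complex.cosh (ω z) ^ 2) z := hqd.const_add 1
    have hlog : HasDerivAt (fun w => Complex.log (1 + q w))
        (N z / Complex.cosh (ω z) ^ 2 / (1 + q z)) z := h1q.clog hslit
    have hhalf : HasDerivAt (fun w => (1/2 : ℂ) * Complex.log (1 + q w))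
        ((1/2 : ℂ) * (N z / Complex.cosh (ω z) ^ 2 / (1 + q z))) z := hlog.const_mul _
    exact hhalf.cexp
  have htanh : ∀ z, psqrt (1 + Complex.tanh (ω z)) = psqrt (1 + q z) := by
    intro z; rw [Complex.tanh_eq_sinh_div_cosh]
  have hgf : ∀ z ∈ ball (0:ℂ) 1, deriv f z = psqrt (1 + q z) := by
    intro z hz; rw [hfg z hz, htanh]
  have hderiv2 : ∀ z ∈ ball (0:ℂ) r, deriv (deriv f) z = D z := by
    intro z hz
    obtain ⟨_, _, _, hz1⟩ := hfacts z hz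
    have heq : deriv f =ᶠ[nhds z] (fun w => psqrt (1 + q w)) := by
      filter_upwards [isOpen_ball.mem_nhds hz1] with w hw using hgf w hw
    rw [heq.deriv_eq, (keyA z hz).deriv]
  have hD0 : D 0 = deriv ω 0 / 2 := by
    simp only [hD, hN, hq, hω0, Complex.sinh_zero, Complex.cosh_zero, psqrt]
    simp [Complex.log_one]
    ring
  have hi2 : iteratedDeriv 2 f 0 = deriv ω 0 / 2 := by
    have : iteratedDeriv 2 f 0 = deriv (deriv f) 0 := by
      simp [iteratedDeriv_succ, iteratedDeriv_one]
    rw [this, hderiv2 0 (mem_ball_self hr0), hD0]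
  refine ⟨hi2, ?_⟩
  have hω' : HasDerivAt ω (deriv ω 0) 0 := (hωa 0 h01).differentiableAt.hasDerivAt
  have hω2 : HasDerivAt (deriv ω) (iteratedDeriv 2 ω 0) 0 := by
    have h := ((hωa.deriv) 0 h01).differentiableAt.hasDerivAt
    have : deriv (deriv ω) 0 = iteratedDeriv 2 ω 0 := by
      simp [iteratedDeriv_succ, iteratedDeriv_one]
    rwa [this] at h
  obtain ⟨hc0, hslit, hne, _⟩ := hfacts 0 (mem_ball_self hr0)
  have hs : HasDerivAt (fun w => Complex.sinh (ω w)) (Complex.cosh (ω 0) * deriv ω 0) 0 :=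
    (Complex.hasDerivAt_sinh (ω 0)).comp 0 hω'
  have hc : HasDerivAt (fun w => Complex.cosh (ω w)) (Complex.sinh (ω 0) * deriv ω 0) 0 :=
    (Complex.hasDerivAt_cosh (ω 0)).comp 0 hω'
  have hNd : HasDerivAt N
      ((Complex.sinh (ω 0) * deriv ω 0 * deriv ω 0 + Complex.cosh (ω 0) * iteratedDeriv 2 ω 0) *
          Complex.cosh (ω 0) +
        Complex.cosh (ω 0) * deriv ω 0 * (Complex.sinh (ω 0) * deriv ω 0) -
        (Complex.cosh (ω 0) * deriv ω 0 * (Complex.sinh (ω 0) * deriv ω 0) +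
          Complex.sinh (ω 0) * (Complex.cosh (ω 0) * deriv ω 0 * deriv ω 0 +
            Complex.sinh (ω 0) * iteratedDeriv 2 ω 0))) 0 :=
    (((hc.mul hω2).mul hc).sub (hs.mul (hs.mul hω2)))
  have hP : HasDerivAt (fun w => Complex.cosh (ω w) ^ 2)
      (2 * Complex.cosh (ω 0) ^ 1 * (Complex.sinh (ω 0) * deriv ω 0)) 0 := hc.pow 2
  have hP0 : Complex.cosh (ω 0) ^ 2 ≠ 0 := pow_ne_zero 2 hc0
  have hqd : HasDerivAt q (N 0 / Complex.cosh (ω 0) ^ 2) 0 := by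
    have := (hs.div hc hc0); exact this
  have h1q : HasDerivAt (fun w => 1 + q w) (N 0 / Complex.cosh (ω 0) ^ 2) 0 := hqd.const_add 1
  have hA : HasDerivAt (fun w => psqrt (1 + q w)) (D 0) 0 := keyA 0 (mem_ball_self hr0)
  have hB := (((hNd.div hP hP0).div h1q hne).const_mul (1/2 : ℂ))
  have hDd := hA.mul hB
  have hev2 : deriv (deriv f) =ᶠ[nhds 0] D := by
    filter_upwards [isOpen_ball.mem_nhds (mem_ball_self hr0)] with w hw using hderiv2 w hw
  have hi3 : iteratedDeriv 3 f 0 = deriv D 0 := by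
    have : iteratedDeriv 3 f 0 = deriv (deriv (deriv f)) 0 := by
      simp [iteratedDeriv_succ, iteratedDeriv_one]
    rw [this, hev2.deriv_eq]
  rw [hi3, show deriv D 0 = _ from hDd.deriv]
  simp only [hD0, hD, hN, hq, hω0, Complex.sinh_zero, Complex.cosh_zero, psqrt]
  simp [Complex.log_one]
  simp only [hω0, Complex.sinh_zero, Complex.cosh_zero]
  ring

theorem BTB_gamma_diff_upper (f : ℂ → ℂ) (hf : IsBTB f) :
    ‖(1/2) * (tCoeff f 3 - (tCoeff f 2)^2 / 2)‖ - ‖tCoeff f 2 / 2‖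
      ≤ 1/12 := by
  obtain ⟨hfa, hf0, hf1, hinj, ω, hωa, hω0, hωlt, hfg⟩ := hf
  obtain ⟨h2, h3⟩ := coeff_formulas hωa hω0 hfg
  set c1 := deriv ω 0 with hc1
  set C2 := iteratedDeriv 2 ω 0 with hC2
  -- bounds on the Schwarz function coefficients
  have hωd : DifferentiableOn ℂ ω (ball 0 1) := fun z hz => (hωa z hz).differentiableAt.differentiableWithinAt
  have hωb : ∀ z ∈ ball (0:ℂ) 1, ‖ω z‖ ≤ 1 := fun z hz => (hωlt z hz).le
  have hb1 : ‖c1‖ ≤ 1 := by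
    have := cauchy_bound hωd hωb 1
    simpa [iteratedDeriv_one] using this
  have hb2 : ‖C2‖ ≤ 2 := by
    have := cauchy_bound hωd hωb 2
    simpa [Nat.factorial] using this
  -- coefficient formulas
  have e2 : tCoeff f 2 = c1 / 4 := by
    rw [tCoeff, h2]
    norm_num [Nat.factorial]
    ring
  have e3 : tCoeff f 3 = (C2 / 2 - c1^2 / 4) / 6 := by
    rw [tCoeff, h3]
    norm_num [Nat.factorial]
  have eγ2 : (1/2 : ℂ) * (tCoeff f 3 - (tCoeff f 2)^2 / 2) = C2 / 24 - (7/192 : ℂ) * c1^2 := by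
    rw [e2, e3]; ring
  have eγ1 : ‖tCoeff f 2 / 2‖ = ‖c1‖ / 8 := by
    rw [e2]
    rw [show c1 / 4 / 2 = c1 / 8 by ring]
    rw [norm_div]
    norm_num
  have key : ‖(1/2 : ℂ) * (tCoeff f 3 - (tCoeff f 2)^2 / 2)‖
      ≤ ‖C2‖ / 24 + 7/192 * (‖c1‖)^2 := by
    rw [eγ2]
    calc ‖C2 / 24 - (7/192 : ℂ) * c1^2‖
        ≤ ‖C2 / 24‖ + ‖(7/192 : ℂ) * c1^2‖ := by
          exact norm_sub_le _ _
      _ = ‖C2‖ / 24 + 7/192 * (‖c1‖)^2 := by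
          rw [norm_div, norm_mul, norm_pow, norm_div]
          norm_num
  rw [eγ1]
  set t := ‖c1‖ with ht
  have ht0 : 0 ≤ t := norm_nonneg _
  nlinarith [key, mul_nonneg ht0 (sub_nonneg.mpr hb1)]
end

section
/- Let f be in the class BT_B with Taylor coefficients a_n, and let γ_1 = a_2/2, γ_2 = (1/2)(a_3 − a_2²/2) be its first two logarithmic coefficients. Then |γ_2| − |γ_1| ≥ −1/(2·√23). -/
open Complex Metric
open Filter Topology

lemma cosh_ne_zero_of_abs_lt_one {w : ℂ} (hw : ‖w‖ < 1) : Complex.cosh w ≠ 0 := by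
  intro h
  have h0 : Complex.cos (w * Complex.I) = 0 := by rw [Complex.cos_mul_I]; exact h
  rw [Complex.cos_eq_zero_iff] at h0
  obtain ⟨k, hk⟩ := h0
  have habs := congrArg norm hk
  rw [norm_mul, Complex.norm_I, mul_one] at habs
  have hcast : (2 * (k:ℂ) + 1) = ((2*k+1 : ℤ) : ℂ) := by push_cast; ring
  rw [norm_div, norm_mul, hcast, Complex.norm_intCast, Complex.norm_real, Real.norm_eq_abs,
    _root_.abs_of_nonneg Real.pi_nonneg] at habs
  norm_num at habs
  have hk1 : (1:ℝ) ≤ |((2*k+1 : ℤ) : ℝ)| := by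
    have : (2*k+1 : ℤ) ≠ 0 := by omega
    exact_mod_cast Int.one_le_abs (by omega)
  have hpi := Real.pi_gt_three
  push_cast at hk1
  have : (1:ℝ) < ‖w‖ := by
    rw [habs]; nlinarith
  linarith

lemma hasDerivAt_ctanh {w : ℂ} (hw : Complex.cosh w ≠ 0) :
    HasDerivAt Complex.tanh (1 / Complex.cosh w ^ 2) w := by
  have h : HasDerivAt (fun z => Complex.sinh z / Complex.cosh z)
      ((Complex.cosh w * Complex.cosh w - Complex.sinh w * Complex.sinh w) / Complex.cosh w ^ 2)
      w := (Complex.hasDerivAt_sinh w).div (Complex.hasDerivAt_cosh w) hw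
  convert h using 1
  · funext z; rw [Complex.tanh_eq_sinh_div_cosh]
  · have h2 := Complex.cosh_sq_sub_sinh_sq w
    have : Complex.cosh w * Complex.cosh w - Complex.sinh w * Complex.sinh w = 1 := by
      linear_combination h2
    rw [this]

lemma key_deriv {ω : ℂ → ℂ} {z : ℂ} (h1 : HasDerivAt ω (deriv ω z) z)
    (ht : ‖Complex.tanh (ω z)‖ < 1) (hc : Complex.cosh (ω z) ≠ 0) :
    HasDerivAt (fun z => psqrt (1 + Complex.tanh (ω z)))
      (psqrt (1 + Complex.tanh (ω z)) * ((1 - Complex.tanh (ω z)) / 2) * deriv ω z) z := by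
  set t := Complex.tanh (ω z) with hts
  have hslit : (1 : ℂ) + t ∈ Complex.slitPlane := by
    rw [Complex.mem_slitPlane_iff]
    left
    have h2 : |t.re| ≤ ‖t‖ := Complex.abs_re_le_norm t
    have h3 := abs_le.1 h2
    simp only [Complex.add_re, Complex.one_re]
    linarith [h3.1]
  have h1t : (1 : ℂ) + t ≠ 0 := Complex.slitPlane_ne_zero hslit
  have htanh : HasDerivAt (fun z => Complex.tanh (ω z)) (1 / Complex.cosh (ω z) ^ 2 * deriv ω z) z :=
    (hasDerivAt_ctanh hc).comp z h1
  have hinner : HasDerivAt (fun z => (1 : ℂ) + Complex.tanh (ω z))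
      (1 / Complex.cosh (ω z) ^ 2 * deriv ω z) z := htanh.const_add 1
  have hlog : HasDerivAt (fun z => Complex.log (1 + Complex.tanh (ω z)))
      (((1:ℂ) + t)⁻¹ * (1 / Complex.cosh (ω z) ^ 2 * deriv ω z)) z :=
    by have := (Complex.hasStrictDerivAt_log hslit).hasDerivAt.comp z hinner; exact this
  have hmul : HasDerivAt (fun z => (1/2 : ℂ) * Complex.log (1 + Complex.tanh (ω z)))
      ((1/2 : ℂ) * (((1:ℂ) + t)⁻¹ * (1 / Complex.cosh (ω z) ^ 2 * deriv ω z))) z :=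
    hlog.const_mul _
  have hexp := (Complex.hasDerivAt_exp ((1/2 : ℂ) * Complex.log (1 + t))).comp z hmul
  have hsq : ((1:ℂ) - t) * (1 + t) = 1 / Complex.cosh (ω z) ^ 2 := by
    have h2 := Complex.cosh_sq_sub_sinh_sq (ω z)
    rw [hts, Complex.tanh_eq_sinh_div_cosh]
    have h3 : Complex.exp (-(ω z)) * Complex.exp (ω z) = 1 := by
      rw [← Complex.exp_add]; simp
    field_simp
    linear_combination h2
  refine hexp.congr_deriv ?_
  rw [show psqrt (1 + t) = Complex.exp ((1/2 : ℂ) * Complex.log (1 + t)) from rfl]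
  rw [← hsq]
  field_simp

lemma real_ineq (x y g2 : ℝ) (hx0 : 0 ≤ x) (hy0 : 0 ≤ y) (hx1 : x ≤ 1)
    (hy : y ≤ 1 - x^2) (hg2 : 0 ≤ g2) (hg2' : 7*x^2/192 - y/12 ≤ g2) :
    g2 - x/8 ≥ -(1 / (2 * Real.sqrt 23)) := by
  set s := Real.sqrt 23 with hsdef
  have hs : s^2 = 23 := Real.sq_sqrt (by norm_num)
  have hs0 : 0 < s := Real.sqrt_pos.2 (by norm_num)
  have hs3 : 3 ≤ s := by nlinarith
  have h46 : 1 / (2 * s) = s / 46 := by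
    rw [div_eq_div_iff (by positivity) (by norm_num)]
    nlinarith
  rw [h46]
  rcases le_or_gt (x * s) 4 with hcase | hcase
  · nlinarith
  · have h23 : 4 * s ≤ 23 * x := by nlinarith
    have hfac : 0 ≤ (x * s - 4) * (23 * x + 4 * s - 24) := by
      apply mul_nonneg <;> nlinarith
    nlinarith

theorem BTB_gamma_diff_lower (f : ℂ → ℂ) (hf : IsBTB f) :
    ‖(1/2) * (tCoeff f 3 - (tCoeff f 2)^2 / 2)‖ - ‖tCoeff f 2 / 2‖
      ≥ -(1 / (2 * Real.sqrt 23)) := by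
  obtain ⟨hfa, hf0, hf'0, hinj, ω, hωa, hω0, hωlt, hfd⟩ := hf
  have h0ball : (0:ℂ) ∈ ball (0:ℂ) 1 := by simp
  have hball : ball (0:ℂ) 1 ∈ 𝓝 (0:ℂ) := isOpen_ball.mem_nhds h0ball
  have hωd : DifferentiableOn ℂ ω (ball 0 1) :=
    fun z hz => ((hωa z hz).differentiableAt).differentiableWithinAt
  set h : ℂ → ℂ := dslope ω 0 with hhdef
  have hhd : DifferentiableOn ℂ h (ball 0 1) :=
    (Complex.differentiableOn_dslope hball).mpr hωd
  have hha : AnalyticOnNhd ℂ h (ball 0 1) := hhd.analyticOnNhd isOpen_ball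
  set c₁ : ℂ := h 0 with hc1def
  set c₂ : ℂ := deriv h 0 with hc2def
  have hc1 : deriv ω 0 = c₁ := (dslope_same ω 0).symm
  have hωz : ∀ z : ℂ, ω z = z * h z := by
    intro z
    have hs := sub_smul_dslope ω 0 z
    rw [hω0, sub_zero, sub_zero, smul_eq_mul] at hs
    exact hs.symm
  have hmaps : Set.MapsTo ω (ball 0 1) (ball (ω 0) 1) := by
    intro z hz
    rw [hω0, mem_ball_zero_iff]
    exact hωlt z hz
  have hhle : ∀ z ∈ ball (0:ℂ) 1, ‖h z‖ ≤ 1 := by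
    intro z hz
    have := Complex.norm_dslope_le_div_of_mapsTo_ball hωd (hmaps.mono_right ball_subset_closedBall) hz
    simpa using this
  have hc1le : ‖c₁‖ ≤ 1 := hhle 0 h0ball
  -- Schwarz–Pick : |c₂| ≤ 1 - |c₁|²
  have hc2le : ‖c₂‖ ≤ 1 - ‖c₁‖ ^ 2 := by
    by_cases hcase : ∀ z ∈ ball (0:ℂ) 1, ‖h z‖ < 1
    · have hc1lt : ‖c₁‖ < 1 := hcase 0 h0ball
      set φ : ℂ → ℂ := fun z => (h z - c₁) / (1 - (starRingEnd ℂ) c₁ * h z) with hφdef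
      have hden : ∀ z ∈ ball (0:ℂ) 1, (1:ℂ) - (starRingEnd ℂ) c₁ * h z ≠ 0 := by
        intro z hz h0
        have hlt : ‖(starRingEnd ℂ) c₁ * h z‖ < 1 := by
          rw [norm_mul, Complex.norm_conj]
          calc ‖c₁‖ * ‖h z‖ ≤ 1 * ‖h z‖ :=
                mul_le_mul_of_nonneg_right hc1le (norm_nonneg _)
            _ = ‖h z‖ := one_mul _
            _ < 1 := hcase z hz
        rw [sub_eq_zero] at h0
        rw [← h0] at hlt
        simp at hlt
      have hφd : DifferentiableOn ℂ φ (ball 0 1) := by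
        apply DifferentiableOn.div
        · exact hhd.sub (differentiableOn_const _)
        · exact (differentiableOn_const _).sub ((differentiableOn_const _).mul hhd)
        · exact hden
      have hφ0 : φ 0 = 0 := by simp [hφdef, ← hc1def]
      have hnormsq : ∀ c w : ℂ, Complex.normSq (1 - (starRingEnd ℂ) c * w)
          - Complex.normSq (w - c) = (1 - Complex.normSq c) * (1 - Complex.normSq w) := by
        intro c w
        simp only [Complex.normSq_apply, Complex.sub_re, Complex.sub_im, Complex.mul_re,
          Complex.mul_im, Complex.one_re, Complex.one_im, Complex.conj_re, Complex.conj_im]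
        ring
      have hφmaps : Set.MapsTo φ (ball 0 1) (ball (φ 0) 1) := by
        intro z hz
        rw [hφ0, mem_ball_zero_iff]
        have hzlt : ‖h z‖ < 1 := hcase z hz
        have hpos : 0 < Complex.normSq (1 - (starRingEnd ℂ) c₁ * h z)
            - Complex.normSq (h z - c₁) := by
          rw [hnormsq]
          apply mul_pos
          · nlinarith [Complex.sq_norm c₁, norm_nonneg c₁]
          · nlinarith [Complex.sq_norm (h z), norm_nonneg (h z)]
        have habslt : ‖h z - c₁‖ < ‖1 - (starRingEnd ℂ) c₁ * h z‖ := by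
          nlinarith [Complex.sq_norm (h z - c₁), Complex.sq_norm (1 - (starRingEnd ℂ) c₁ * h z),
            norm_nonneg (h z - c₁), norm_nonneg (1 - (starRingEnd ℂ) c₁ * h z)]
        show ‖(h z - c₁) / (1 - (starRingEnd ℂ) c₁ * h z)‖ < 1
        rw [norm_div, div_lt_one (lt_of_le_of_lt (norm_nonneg _) habslt)]
        exact habslt
      have hh0' : HasDerivAt h c₂ 0 := ((hhd 0 h0ball).differentiableAt hball).hasDerivAt
      have hN : HasDerivAt (fun z => h z - c₁) c₂ 0 := hh0'.sub_const c₁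
      have hD : HasDerivAt (fun z => (1:ℂ) - (starRingEnd ℂ) c₁ * h z)
          (-((starRingEnd ℂ) c₁ * c₂)) 0 := (hh0'.const_mul _).const_sub 1
      have hD0 : (1:ℂ) - (starRingEnd ℂ) c₁ * h 0 = ((1 - Complex.normSq c₁ : ℝ) : ℂ) := by
        rw [← hc1def, mul_comm, Complex.mul_conj]
        push_cast
        ring
      have hD0ne : (1:ℂ) - (starRingEnd ℂ) c₁ * h 0 ≠ 0 := hden 0 h0ball
      have hφder : HasDerivAt φ ((c₂ * (1 - (starRingEnd ℂ) c₁ * h 0)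
          - (h 0 - c₁) * (-((starRingEnd ℂ) c₁ * c₂))) / (1 - (starRingEnd ℂ) c₁ * h 0)^2) 0 :=
        hN.div hD hD0ne
      have hd0pos : 0 < 1 - Complex.normSq c₁ := by
        nlinarith [Complex.sq_norm c₁, norm_nonneg c₁]
      have hval : deriv φ 0 = c₂ / ((1 - Complex.normSq c₁ : ℝ) : ℂ) := by
        have hne : ((1 - Complex.normSq c₁ : ℝ) : ℂ) ≠ 0 := by
          exact_mod_cast hd0pos.ne'
        rw [hφder.deriv, hD0, ← hc1def, sub_self, zero_mul, sub_zero, sq,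
          mul_comm c₂ (((1 - Complex.normSq c₁ : ℝ) : ℂ)), mul_div_mul_left _ _ hne]
      have hφmaps' : Set.MapsTo φ (ball 0 1) (ball 0 1) := by
        intro z hz; have := hφmaps hz; rwa [hφ0] at this
      have hSch := Complex.norm_deriv_le_one_of_mapsTo_ball hφd (hφmaps.mono_right ball_subset_closedBall) one_pos
      rw [hval, norm_div, Complex.norm_real, Real.norm_eq_abs, _root_.abs_of_pos hd0pos,
        div_le_one hd0pos] at hSch
      calc ‖c₂‖ ≤ 1 - Complex.normSq c₁ := hSch
        _ = 1 - ‖c₁‖ ^ 2 := by rw [Complex.sq_norm]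
    · push_neg at hcase
      obtain ⟨z₀, hz₀, hz₀ge⟩ := hcase
      have hz₀eq : ‖h z₀‖ = 1 :=
        le_antisymm (by simpa using hhle z₀ hz₀)
          (by simpa using hz₀ge)
      have hmax : IsMaxOn (norm ∘ h) (ball 0 1) z₀ := by
        intro z hz
        simp only [Function.comp_apply, Set.mem_setOf_eq, hz₀eq]
        simpa using hhle z hz
      have hconst := Complex.eqOn_of_isPreconnected_of_isMaxOn_norm
        (convex_ball _ _).isPreconnected isOpen_ball hhd hz₀ hmax
      have hev : h =ᶠ[𝓝 (0:ℂ)] fun _ => h z₀ :=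
        Filter.eventuallyEq_of_mem hball (fun z hz => hconst hz)
      have hd0 : deriv h 0 = 0 := by rw [hev.deriv_eq]; simp
      rw [hc2def, hd0]
      simp only [norm_zero]
      nlinarith [norm_nonneg c₁]
  -- derivative computations
  set G : ℂ → ℂ := fun z => psqrt (1 + Complex.tanh (ω z)) with hGdef
  have hfG : deriv f =ᶠ[𝓝 (0:ℂ)] G := Filter.eventuallyEq_of_mem hball (fun z hz => hfd z hz)
  have hcont : ContinuousOn (fun z => ‖Complex.tanh (ω z)‖) (ball 0 1) := by
    apply continuous_norm.comp_continuousOn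
    intro z hz
    have hc := cosh_ne_zero_of_abs_lt_one (hωlt z hz)
    have hct : ContinuousAt Complex.tanh (ω z) := (hasDerivAt_ctanh hc).continuousAt
    exact hct.comp_continuousWithinAt (hωd z hz).continuousWithinAt
  set sU : Set ℂ := ball 0 1 ∩ (fun z => ‖Complex.tanh (ω z)‖) ⁻¹' Set.Iio 1
    with hsdef
  have hsopen : IsOpen sU := hcont.isOpen_inter_preimage isOpen_ball isOpen_Iio
  have hT0 : Complex.tanh (ω 0) = 0 := by rw [hω0]; exact Complex.tanh_zero
  have hs0 : (0:ℂ) ∈ sU := ⟨h0ball, by simp [hT0]⟩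
  have hsnhds : sU ∈ 𝓝 (0:ℂ) := hsopen.mem_nhds hs0
  have hGd : ∀ z ∈ sU, HasDerivAt G (G z * ((1 - Complex.tanh (ω z)) / 2) * deriv ω z) z := by
    intro z hz
    exact key_deriv ((hωa z hz.1).differentiableAt.hasDerivAt) hz.2
      (cosh_ne_zero_of_abs_lt_one (hωlt z hz.1))
  set D : ℂ → ℂ := fun z => G z * ((1 - Complex.tanh (ω z)) / 2) * deriv ω z with hDdef
  have hGD : deriv G =ᶠ[𝓝 (0:ℂ)] D :=
    Filter.eventuallyEq_of_mem hsnhds (fun z hz => (hGd z hz).deriv)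
  have hG0 : G 0 = 1 := by
    rw [hGdef]
    simp only []
    rw [hT0, add_zero, psqrt, Complex.log_one, mul_zero, Complex.exp_zero]
  have hi2 : iteratedDeriv 2 f 0 = c₁ / 2 := by
    rw [show (2:ℕ) = 1 + 1 from rfl, iteratedDeriv_succ, iteratedDeriv_one]
    rw [hfG.deriv_eq, (hGd 0 hs0).deriv, hG0, hT0, hc1]
    ring
  have hi3 : iteratedDeriv 3 f 0 = c₂ - c₁^2/4 := by
    have e23 : iteratedDeriv 3 f = deriv (deriv (deriv f)) := by
      rw [show (3:ℕ) = 2+1 from rfl, iteratedDeriv_succ, show (2:ℕ) = 1+1 from rfl,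
        iteratedDeriv_succ, iteratedDeriv_one]
    rw [e23, (hfG.deriv).deriv_eq, hGD.deriv_eq]
    have hGd0 : HasDerivAt G (c₁/2) 0 := by
      have hder := hGd 0 hs0
      rw [hG0, hT0, hc1] at hder
      convert hder using 1
      ring
    have habs0 : ‖ω 0‖ < 1 := by rw [hω0]; simp
    have htanh0 : HasDerivAt (fun z => Complex.tanh (ω z)) c₁ 0 := by
      have hc := cosh_ne_zero_of_abs_lt_one habs0
      have hder := (hasDerivAt_ctanh hc).comp 0 ((hωa 0 h0ball).differentiableAt.hasDerivAt)
      refine hder.congr_deriv ?_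
      rw [hω0, Complex.cosh_zero, hc1]
      ring
    have hB : HasDerivAt (fun z => ((1:ℂ) - Complex.tanh (ω z)) / 2) (-(c₁/2)) 0 := by
      have hder := (htanh0.const_sub 1).div_const 2
      refine hder.congr_deriv ?_
      ring
    have hh0' : HasDerivAt h c₂ 0 := ((hhd 0 h0ball).differentiableAt hball).hasDerivAt
    have hdh : HasDerivAt (deriv h) (deriv (deriv h) 0) 0 :=
      ((hha.deriv 0 h0ball).differentiableAt).hasDerivAt
    have hωev : deriv ω =ᶠ[𝓝 (0:ℂ)] fun z => h z + z * deriv h z := by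
      apply Filter.eventuallyEq_of_mem hball
      intro z hz
      have hhz : HasDerivAt h (deriv h z) z :=
        ((hhd z hz).differentiableAt (isOpen_ball.mem_nhds hz)).hasDerivAt
      have hmul : HasDerivAt (fun w => w * h w) (1 * h z + z * deriv h z) z :=
        (hasDerivAt_id z).mul hhz
      have hω' : HasDerivAt ω (1 * h z + z * deriv h z) z :=
        hmul.congr_of_eventuallyEq (Filter.Eventually.of_forall hωz)
      rw [hω'.deriv]
      ring
    have hC : HasDerivAt (deriv ω) (2 * c₂) 0 := by
      have hsum : HasDerivAt (fun z => h z + z * deriv h z)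
          (c₂ + (1 * deriv h 0 + 0 * deriv (deriv h) 0)) 0 :=
        hh0'.add ((hasDerivAt_id 0).mul hdh)
      have hder := hsum.congr_of_eventuallyEq hωev
      refine hder.congr_deriv ?_
      rw [← hc2def]
      ring
    have hDder := (hGd0.mul hB).mul hC
    rw [show D = (G * fun z => (1 - Complex.tanh (ω z)) / 2) * deriv ω from rfl, hDder.deriv]
    simp only [Pi.mul_apply]
    rw [hG0, hT0, hc1]
    ring
  -- finish
  have ht2 : tCoeff f 2 = c₁ / 4 := by
    rw [tCoeff, hi2]; norm_num [Nat.factorial]; ring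
  have ht3 : tCoeff f 3 = (c₂ - c₁^2/4) / 6 := by
    rw [tCoeff, hi3]; norm_num [Nat.factorial]
  rw [ht2, ht3]
  have he1 : (1/2 : ℂ) * ((c₂ - c₁^2/4)/6 - (c₁/4)^2/2) = c₂/12 - 7*c₁^2/192 := by ring
  rw [he1]
  have he2 : (c₁ : ℂ)/4/2 = c₁/8 := by ring
  rw [he2]
  set x := ‖c₁‖ with hx
  set y := ‖c₂‖ with hy
  have habs8 : ‖c₁/8‖ = x/8 := by
    rw [norm_div]; norm_num; rfl
  have hlow : 7*x^2/192 - y/12 ≤ ‖c₂/12 - 7*c₁^2/192‖ := by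
    have h1 : ‖7*c₁^2/192 - c₂/12‖ = ‖c₂/12 - 7*c₁^2/192‖ := by
      rw [show (7*c₁^2/192 - c₂/12 : ℂ) = -(c₂/12 - 7*c₁^2/192) from by ring, norm_neg]
    calc 7*x^2/192 - y/12
        = ‖7*c₁^2/192‖ - ‖c₂/12‖ := by
          rw [norm_div, norm_div, norm_mul, norm_pow]; norm_num; rfl
      _ ≤ ‖7*c₁^2/192 - c₂/12‖ := by
          have := norm_sub_norm_le (7*c₁^2/192 : ℂ) (c₂/12)
          simpa [sub_le_iff_le_add] using this
      _ = ‖c₂/12 - 7*c₁^2/192‖ := h1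
  rw [habs8]
  exact real_ineq x y _ (norm_nonneg _) (norm_nonneg _) hc1le hc2le
    (norm_nonneg _) hlow
end

section
/- The function f_1 defined on the unit disk by f_1(z) = ∫₀^z (1 + tanh t)^{1/2} dt belongs to the class BT_B, and its first logarithmic coefficient γ_1 = a_2/2 satisfies |γ_1| = 1/8 (its second Taylor coefficient is a_2 = 1/4). Hence the bound |γ_1| ≤ 1/8 for the class BT_B is sharp. -/
set_option maxHeartbeats 1000000

open Complex Metric intervalIntegral

noncomputable def f₁ (z : ℂ) : ℂ :=
  ∫ t in (0:ℝ)..1, z * psqrt (1 + Complex.tanh ((t : ℂ) * z))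

/-! ### Auxiliary functions -/

noncomputable def gg : ℂ → ℂ := fun z => psqrt (1 + Complex.tanh z)

lemma gg_def : gg = fun z => Complex.exp ((1/2 : ℂ) * Complex.log (1 + Complex.tanh z)) := rfl

lemma gg_eq (z : ℂ) : gg z = psqrt (1 + Complex.tanh z) := rfl

noncomputable def dgg (z : ℂ) : ℂ :=
  gg z * ((1/2 : ℂ) * ((1 + Complex.tanh z)⁻¹ * (1 / Complex.cosh z ^ 2)))

attribute [irreducible] gg

/-! ### exp(2z) is never a nonpositive real for |z| < 1 -/

lemma exp_two_ne_nonpos {z : ℂ} (hz : ‖z‖ < 1) {s : ℝ} (hs : s ≤ 0) :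
    Complex.exp (2 * z) ≠ (s : ℂ) := by
  intro h
  have hs0 : (s:ℂ) ≠ 0 := by
    rw [← h]; exact Complex.exp_ne_zero _
  have hsneg : s < 0 := lt_of_le_of_ne hs (by exact_mod_cast hs0)
  have hpos : 0 < -s := by linarith
  set L : ℝ := Real.log (-s) with hL
  have h1 : Complex.exp (2 * z - (L:ℂ) + Real.pi * I) = 1 := by
    rw [sub_add_eq_add_sub, Complex.exp_sub, Complex.exp_add, h, Complex.exp_pi_mul_I]
    rw [← Complex.ofReal_exp, Real.exp_log hpos]
    field_simp
    rw [Complex.ofReal_neg, div_neg, neg_neg, div_self hs0]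
  obtain ⟨n, hn⟩ := Complex.exp_eq_one_iff.mp h1
  have him : 2 * z.im + Real.pi = n * (2 * Real.pi) := by
    have := congrArg Complex.im hn
    simpa using this
  have hzim : z.im = (2 * (n:ℝ) - 1) * (Real.pi / 2) := by linarith
  have h2 : |z.im| ≤ ‖z‖ := Complex.abs_im_le_norm z
  have h3 : (1:ℝ) ≤ |2 * (n:ℝ) - 1| := by
    rcases le_or_gt 1 (n:ℝ) with h | h
    · rw [_root_.abs_of_nonneg (by linarith)]; linarith
    · have : (n:ℝ) ≤ 0 := by
        have : (n:ℤ) ≤ 0 := by exact_mod_cast Int.lt_add_one_iff.mp (by exact_mod_cast h)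
        exact_mod_cast this
      rw [_root_.abs_of_nonpos (by linarith)]; linarith
  have hpi : (2:ℝ) < Real.pi := by
    have := Real.pi_gt_three; linarith
  rw [hzim, abs_mul, _root_.abs_of_nonneg (by positivity : (0:ℝ) ≤ Real.pi / 2)] at h2
  nlinarith [abs_nonneg (2 * (n:ℝ) - 1)]

lemma cosh_ne_zero' {z : ℂ} (hz : ‖z‖ < 1) : Complex.cosh z ≠ 0 := by
  intro h
  have h0 : Complex.exp z + Complex.exp (-z) = 0 := by
    have : Complex.cosh z = (Complex.exp z + Complex.exp (-z)) / 2 := rfl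
    rw [this] at h
    field_simp at h
    simpa using h
  have hv : Complex.exp z * Complex.exp (-z) = 1 := by rw [← Complex.exp_add]; simp
  have h2 : Complex.exp (2 * z) = ((-1 : ℝ) : ℂ) := by
    rw [two_mul, Complex.exp_add]
    push_cast
    linear_combination Complex.exp z * h0 - hv
  exact exp_two_ne_nonpos hz (by norm_num) h2

lemma one_add_tanh_slit {z : ℂ} (hz : ‖z‖ < 1) :
    1 + Complex.tanh z ∈ Complex.slitPlane := by
  by_contra hmem
  rw [Complex.mem_slitPlane_iff] at hmem
  push_neg at hmem
  obtain ⟨hre, him⟩ := hmem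
  set w : ℝ := (Complex.tanh z).re with hw
  have htanh : Complex.tanh z = (w : ℂ) := by
    apply Complex.ext
    · simp [hw]
    · have : (1 + Complex.tanh z).im = 0 := him
      simpa using this
  have hwle : w ≤ -1 := by
    have h1 : (1 : ℝ) + w ≤ 0 := by
      have := hre; rw [htanh] at this; simpa using this
    linarith
  have hcosh := cosh_ne_zero' hz
  have heq : Complex.sinh z - w * Complex.cosh z = 0 := by
    have := Complex.tanh_eq_sinh_div_cosh z
    rw [htanh] at this
    field_simp at this
    rw [← this]; ring
  have hv : Complex.exp z * Complex.exp (-z) = 1 := by rw [← Complex.exp_add]; simp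
  have hsc : Complex.exp z - Complex.exp (-z) - (w:ℂ) * (Complex.exp z + Complex.exp (-z)) = 0 := by
    have hs : Complex.sinh z = (Complex.exp z - Complex.exp (-z)) / 2 := rfl
    have hc : Complex.cosh z = (Complex.exp z + Complex.exp (-z)) / 2 := rfl
    rw [hs, hc] at heq
    linear_combination 2 * heq
  have hexp : Complex.exp (2 * z) * (1 - (w:ℂ)) = 1 + (w:ℂ) := by
    rw [two_mul, Complex.exp_add]
    linear_combination Complex.exp z * hsc + (1 + (w:ℂ)) * hv
  have hwne : (1 : ℝ) - w ≠ 0 := by linarith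
  have hval : Complex.exp (2 * z) = (((1 + w) / (1 - w) : ℝ) : ℂ) := by
    push_cast
    rw [eq_div_iff (by exact_mod_cast hwne)]
    exact hexp
  have hsle : (1 + w) / (1 - w) ≤ 0 :=
    div_nonpos_iff.mpr (Or.inr ⟨by linarith, by linarith⟩)
  exact exp_two_ne_nonpos hz hsle hval

/-! ### Derivative facts -/

lemma hasDerivAt_tanh' {z : ℂ} (h : Complex.cosh z ≠ 0) :
    HasDerivAt Complex.tanh (1 / Complex.cosh z ^ 2) z := by
  have hd : HasDerivAt (fun w => Complex.sinh w / Complex.cosh w)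
      ((Complex.cosh z * Complex.cosh z - Complex.sinh z * Complex.sinh z) / Complex.cosh z ^ 2) z :=
    (Complex.hasDerivAt_sinh z).div (Complex.hasDerivAt_cosh z) h
  have hfun : (fun w => Complex.sinh w / Complex.cosh w) = Complex.tanh := by
    funext w; exact (Complex.tanh_eq_sinh_div_cosh w).symm
  rw [hfun] at hd
  have hnum : Complex.cosh z * Complex.cosh z - Complex.sinh z * Complex.sinh z = 1 := by
    have := Complex.cosh_sq_sub_sinh_sq z
    linear_combination this
  rw [hnum] at hd
  exact hd

lemma hasDerivAt_gg {z : ℂ} (hz : ‖z‖ < 1) : HasDerivAt gg (dgg z) z := by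
  have h1 : HasDerivAt (fun w => 1 + Complex.tanh w) (1 / Complex.cosh z ^ 2) z :=
    (hasDerivAt_tanh' (cosh_ne_zero' hz)).const_add 1
  have h2 : HasDerivAt Complex.log (1 + Complex.tanh z)⁻¹ (1 + Complex.tanh z) :=
    Complex.hasDerivAt_log (one_add_tanh_slit hz)
  have h3 : HasDerivAt (fun w => Complex.log (1 + Complex.tanh w))
      ((1 + Complex.tanh z)⁻¹ * (1 / Complex.cosh z ^ 2)) z := by have h3' := h2.comp z h1; exact h3'
  have h4 : HasDerivAt (fun w => (1/2 : ℂ) * Complex.log (1 + Complex.tanh w))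
      ((1/2 : ℂ) * ((1 + Complex.tanh z)⁻¹ * (1 / Complex.cosh z ^ 2))) z := h3.const_mul _
  have h5 := (Complex.hasDerivAt_exp ((1/2 : ℂ) * Complex.log (1 + Complex.tanh z))).comp z h4
  rw [gg_def]
  simp only [dgg, gg_def, psqrt]
  exact h5

lemma gg_zero : gg 0 = 1 := by
  rw [gg_def]; simp [Complex.tanh_zero]

lemma dgg_zero : dgg 0 = 1/2 := by
  simp [dgg, gg_zero, Complex.tanh_zero, Complex.cosh_zero]

lemma re_gg_pos {z : ℂ} (hz : ‖z‖ < 1) : 0 < (gg z).re := by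
  have hslit := one_add_tanh_slit hz
  set u := 1 + Complex.tanh z with hu
  have harg : |Complex.arg u| < Real.pi := by
    rw [abs_lt]
    exact ⟨Complex.neg_pi_lt_arg u,
      lt_of_le_of_ne (Complex.arg_le_pi u) (Complex.slitPlane_arg_ne_pi hslit)⟩
  have him : ((1/2 : ℂ) * Complex.log u).im = Complex.arg u / 2 := by
    simp [Complex.mul_im, Complex.log_im]
    ring
  have hgz : gg z = Complex.exp ((1/2 : ℂ) * Complex.log u) := by rw [gg_def]
  rw [hgz, Complex.exp_re, him]
  apply mul_pos (Real.exp_pos _)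
  apply Real.cos_pos_of_mem_Ioo
  rw [abs_lt] at harg
  constructor <;> [linarith; linarith]

lemma continuousAt_gg {z : ℂ} (hz : ‖z‖ < 1) : ContinuousAt gg z :=
  (hasDerivAt_gg hz).continuousAt

lemma continuousAt_tanh' {z : ℂ} (hz : ‖z‖ < 1) : ContinuousAt Complex.tanh z :=
  (hasDerivAt_tanh' (cosh_ne_zero' hz)).continuousAt

lemma continuousAt_dgg {z : ℂ} (hz : ‖z‖ < 1) : ContinuousAt dgg z := by
  have h1 : ContinuousAt (fun w => 1 + Complex.tanh w) z :=
    continuousAt_const.add (continuousAt_tanh' hz)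
  have hne : 1 + Complex.tanh z ≠ 0 := Complex.slitPlane_ne_zero (one_add_tanh_slit hz)
  have h2 : ContinuousAt (fun w => (1 + Complex.tanh w)⁻¹) z := h1.inv₀ hne
  have h3 : ContinuousAt (fun w => 1 / Complex.cosh w ^ 2) z :=
    continuousAt_const.div ((Complex.continuous_cosh.continuousAt).pow 2)
      (pow_ne_zero 2 (cosh_ne_zero' hz))
  exact (continuousAt_gg hz).mul (continuousAt_const.mul (h2.mul h3))

/-! ### The parametrized integrand -/

noncomputable def FF' (x : ℂ) (t : ℝ) : ℂ := gg ((t:ℂ)*x) + (t:ℂ)*x*dgg ((t:ℂ)*x)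

lemma abs_smul_le {t : ℝ} (ht : t ∈ Set.uIcc (0:ℝ) 1) (x : ℂ) :
    ‖(t:ℂ)*x‖ ≤ ‖x‖ := by
  rw [Set.uIcc_of_le (by norm_num : (0:ℝ) ≤ 1)] at ht
  rw [norm_mul, Complex.norm_real, Real.norm_eq_abs, _root_.abs_of_nonneg ht.1]
  nlinarith [norm_nonneg x, ht.2]

lemma contOn_FF' {z : ℂ} (hz : ‖z‖ < 1) :
    ContinuousOn (fun t : ℝ => FF' z t) (Set.uIcc (0:ℝ) 1) := by
  intro t ht
  have habs : ‖(t:ℂ)*z‖ < 1 := lt_of_le_of_lt (abs_smul_le ht z) hz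
  have hcin : ContinuousAt (fun s : ℝ => (s:ℂ) * z) t :=
    (Complex.continuous_ofReal.mul continuous_const).continuousAt
  have h1 : ContinuousAt (fun s : ℝ => gg ((s:ℂ)*z)) t :=
    ContinuousAt.comp (g := gg) (f := fun s : ℝ => (s:ℂ)*z) (x := t)
      (continuousAt_gg habs) hcin
  have h2 : ContinuousAt (fun s : ℝ => dgg ((s:ℂ)*z)) t :=
    ContinuousAt.comp (g := dgg) (f := fun s : ℝ => (s:ℂ)*z) (x := t)
      (continuousAt_dgg habs) hcin
  exact ((h1.add (hcin.mul h2))).continuousWithinAt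

lemma contOn_F {z : ℂ} (hz : ‖z‖ < 1) :
    ContinuousOn (fun t : ℝ => z * gg ((t:ℂ)*z)) (Set.uIcc (0:ℝ) 1) := by
  intro t ht
  have habs : ‖(t:ℂ)*z‖ < 1 := lt_of_le_of_lt (abs_smul_le ht z) hz
  have hcin : ContinuousAt (fun s : ℝ => (s:ℂ) * z) t :=
    (Complex.continuous_ofReal.mul continuous_const).continuousAt
  have h1 : ContinuousAt (fun s : ℝ => gg ((s:ℂ)*z)) t :=
    ContinuousAt.comp (g := gg) (f := fun s : ℝ => (s:ℂ)*z) (x := t)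
      (continuousAt_gg habs) hcin
  exact (continuousAt_const.mul h1).continuousWithinAt

lemma key_integral {z : ℂ} (hz : ‖z‖ < 1) :
    (∫ t in (0:ℝ)..1, FF' z t) = gg z := by
  have hderiv : ∀ t ∈ Set.uIcc (0:ℝ) 1,
      HasDerivAt (fun t : ℝ => (t:ℂ) * gg ((t:ℂ)*z)) (FF' z t) t := by
    intro t ht
    have habs : ‖(t:ℂ)*z‖ < 1 := lt_of_le_of_lt (abs_smul_le ht z) hz
    have hc : HasDerivAt (fun u : ℂ => u * gg (u*z))
        (1 * gg ((t:ℂ)*z) + (t:ℂ) * (dgg ((t:ℂ)*z) * z)) ((t:ℂ)) := by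
      have hinner : HasDerivAt (fun u : ℂ => u * z) z (t:ℂ) := hasDerivAt_mul_const z
      have houter := (hasDerivAt_gg habs).comp (t:ℂ) hinner
      exact (hasDerivAt_id ((t:ℂ))).mul houter
    have := hc.comp_ofReal
    convert this using 1
    simp only [FF']
    ring
  rw [integral_eq_sub_of_hasDerivAt hderiv ((contOn_FF' hz).intervalIntegrable)]
  simp [gg_zero]

/-! ### The derivative of f₁ -/

lemma f₁_hasDerivAt {z₀ : ℂ} (hz₀ : ‖z₀‖ < 1) : HasDerivAt f₁ (gg z₀) z₀ := by
  set r : ℝ := (1 + ‖z₀‖) / 2 with hrdef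
  have habs0 : 0 ≤ ‖z₀‖ := norm_nonneg z₀
  have hr0 : ‖z₀‖ < r := by rw [hrdef]; linarith
  have hr1 : r < 1 := by rw [hrdef]; linarith
  have hrpos : 0 < r := by rw [hrdef]; linarith
  set ε : ℝ := r - ‖z₀‖ with hεdef
  have hε : 0 < ε := by rw [hεdef]; linarith
  -- bounds on the compact disk
  have hcont_gg : ContinuousOn gg (closedBall (0:ℂ) r) := by
    intro w hw
    have : ‖w‖ < 1 := by
      have := mem_closedBall_zero_iff.mp hw
      linarith
    exact (continuousAt_gg this).continuousWithinAt
  have hcont_dgg : ContinuousOn dgg (closedBall (0:ℂ) r) := by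
    intro w hw
    have : ‖w‖ < 1 := by
      have := mem_closedBall_zero_iff.mp hw
      linarith
    exact (continuousAt_dgg this).continuousWithinAt
  obtain ⟨M1, hM1⟩ := (isCompact_closedBall (0:ℂ) r).exists_bound_of_continuousOn hcont_gg
  obtain ⟨M2, hM2⟩ := (isCompact_closedBall (0:ℂ) r).exists_bound_of_continuousOn hcont_dgg
  -- abs of x near z₀
  have hx_lt : ∀ x ∈ ball z₀ ε, ‖x‖ < r := by
    intro x hx
    have hd : dist x z₀ < ε := mem_ball.mp hx
    have htri : dist x (0:ℂ) ≤ dist x z₀ + dist z₀ 0 := dist_triangle _ _ _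
    have h1 : ‖x‖ ≤ dist x z₀ + ‖z₀‖ := by
      simpa [Complex.dist_eq] using htri
    have : ‖x‖ < ε + ‖z₀‖ := by linarith
    rw [hεdef] at this
    linarith
  have htx_mem : ∀ (t : ℝ), t ∈ Set.uIcc (0:ℝ) 1 → ∀ x ∈ ball z₀ ε,
      ((t:ℂ)*x) ∈ closedBall (0:ℂ) r := by
    intro t ht x hx
    rw [mem_closedBall_zero_iff]
    exact le_trans (abs_smul_le ht x) (hx_lt x hx).le
  have main := intervalIntegral.hasDerivAt_integral_of_dominated_loc_of_deriv_le
    (F := fun (x : ℂ) (t : ℝ) => x * gg ((t:ℂ)*x)) (F' := FF') (x₀ := z₀)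
    (a := (0:ℝ)) (b := 1) (μ := MeasureTheory.volume)
    (bound := fun _ => |M1| + |M2|) (Metric.ball_mem_nhds z₀ hε)
    ?_ ?_ ?_ ?_ ?_ ?_
  · obtain ⟨-, hd⟩ := main
    rw [key_integral hz₀] at hd
    have hfeq : f₁ = fun x : ℂ => ∫ t in (0:ℝ)..1, x * gg ((t:ℂ)*x) := by
      funext x
      simp only [f₁, gg_eq]
    rw [hfeq]
    exact hd
  · -- hF_meas
    filter_upwards [Metric.ball_mem_nhds z₀ hε] with x hx
    have hx1 : ‖x‖ < 1 := lt_trans (hx_lt x hx) hr1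
    exact ((contOn_F hx1).mono Set.uIoc_subset_uIcc).aestronglyMeasurable
      measurableSet_uIoc
  · exact (contOn_F hz₀).intervalIntegrable
  · exact ((contOn_FF' hz₀).mono Set.uIoc_subset_uIcc).aestronglyMeasurable
      measurableSet_uIoc
  · -- bound
    apply Filter.Eventually.of_forall
    intro t ht x hx
    have htIcc : t ∈ Set.uIcc (0:ℝ) 1 := Set.uIoc_subset_uIcc ht
    have htx := htx_mem t htIcc x hx
    have hb1 : ‖gg ((t:ℂ)*x)‖ ≤ |M1| := le_trans (hM1 _ htx) (le_abs_self M1)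
    have hb2 : ‖dgg ((t:ℂ)*x)‖ ≤ |M2| := le_trans (hM2 _ htx) (le_abs_self M2)
    have htx1 : ‖(t:ℂ)*x‖ ≤ 1 := by
      calc ‖(t:ℂ)*x‖ ≤ ‖x‖ := abs_smul_le htIcc x
        _ ≤ r := (hx_lt x hx).le
        _ ≤ 1 := hr1.le
    calc ‖FF' x t‖ ≤ ‖gg ((t:ℂ)*x)‖ + ‖(t:ℂ)*x*dgg ((t:ℂ)*x)‖ := norm_add_le _ _
      _ = ‖gg ((t:ℂ)*x)‖ + ‖(t:ℂ)*x‖ * ‖dgg ((t:ℂ)*x)‖ := by rw [norm_mul]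
      _ ≤ |M1| + 1 * |M2| := by
          have h0 : (0:ℝ) ≤ ‖dgg ((t:ℂ)*x)‖ := norm_nonneg _
          have := mul_le_mul htx1 hb2 h0 zero_le_one
          linarith
      _ = |M1| + |M2| := by ring
  · exact intervalIntegrable_const
  · -- differentiability in x
    apply Filter.Eventually.of_forall
    intro t ht x hx
    have htIcc : t ∈ Set.uIcc (0:ℝ) 1 := Set.uIoc_subset_uIcc ht
    have htx := htx_mem t htIcc x hx
    have habs : ‖(t:ℂ)*x‖ < 1 := by
      have := mem_closedBall_zero_iff.mp htx
      linarith
    have hinner : HasDerivAt (fun u : ℂ => (t:ℂ) * u) (t:ℂ) x := by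
      simpa using (hasDerivAt_id x).const_mul (t:ℂ)
    have houter := (hasDerivAt_gg habs).comp x hinner
    have hfull : HasDerivAt (fun u : ℂ => u * gg ((t:ℂ)*u))
        (1 * gg ((t:ℂ)*x) + x * (dgg ((t:ℂ)*x) * t)) x := (hasDerivAt_id x).mul houter
    refine hfull.congr_deriv ?_
    simp only [FF', Function.comp_apply, id_eq]
    ring

/-! ### Injectivity -/

lemma f₁_injOn : Set.InjOn f₁ (ball (0:ℂ) 1) := by
  intro a ha b hb hab
  by_contra hne
  have hba : b - a ≠ 0 := sub_ne_zero.mpr (Ne.symm hne)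
  set γ : ℝ → ℂ := fun t => a + (t:ℂ) * (b - a) with hγ
  have hmem : ∀ t ∈ Set.uIcc (0:ℝ) 1, ‖γ t‖ < 1 := by
    intro t ht
    rw [Set.uIcc_of_le (by norm_num : (0:ℝ) ≤ 1)] at ht
    have h := (convex_ball (0:ℂ) 1) ha hb
      (by linarith [ht.2] : (0:ℝ) ≤ 1 - t) ht.1 (by ring)
    have heq : γ t = (1 - t : ℝ) • a + (t:ℝ) • b := by
      simp only [hγ, real_smul]
      push_cast
      ring
    rw [heq]
    simpa [mem_ball_zero_iff] using h
  have hγcont : Continuous γ := by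
    exact continuous_const.add (Complex.continuous_ofReal.mul continuous_const)
  have hφcont : ContinuousOn (fun t : ℝ => gg (γ t)) (Set.uIcc (0:ℝ) 1) := by
    intro t ht
    exact (ContinuousAt.comp (g := gg) (f := γ) (x := t)
      (continuousAt_gg (hmem t ht)) hγcont.continuousAt).continuousWithinAt
  have hφint : IntervalIntegrable (fun t : ℝ => gg (γ t)) MeasureTheory.volume 0 1 :=
    hφcont.intervalIntegrable
  have hderiv : ∀ t ∈ Set.uIcc (0:ℝ) 1,
      HasDerivAt (fun t : ℝ => f₁ (γ t)) (gg (γ t) * (b - a)) t := by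
    intro t ht
    have hinner : HasDerivAt (fun u : ℂ => a + u * (b - a)) (b - a) (t:ℂ) :=
      (hasDerivAt_mul_const (b - a)).const_add a
    have houter := (f₁_hasDerivAt (hmem t ht)).comp (t:ℂ) hinner
    exact houter.comp_ofReal
  have hint : IntervalIntegrable (fun t : ℝ => gg (γ t) * (b - a)) MeasureTheory.volume 0 1 :=
    hφint.mul_const _
  have hzero : (∫ t in (0:ℝ)..1, gg (γ t) * (b - a)) = 0 := by
    rw [integral_eq_sub_of_hasDerivAt hderiv hint]
    have h1 : γ (1:ℝ) = b := by simp [hγ]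
    have h0 : γ (0:ℝ) = a := by simp [hγ]
    rw [h1, h0, hab, sub_self]
  have hIz : (∫ t in (0:ℝ)..1, gg (γ t)) = 0 := by
    have := hzero
    rw [intervalIntegral.integral_mul_const] at this
    exact (mul_eq_zero.mp this).resolve_right hba
  have hre : (∫ t in (0:ℝ)..1, (gg (γ t)).re) = 0 := by
    have := Complex.reCLM.intervalIntegral_comp_comm hφint
    simp only [Complex.reCLM_apply] at this
    rw [this, hIz]
    simp
  have hrepos : 0 < ∫ t in (0:ℝ)..1, (gg (γ t)).re := by
    apply intervalIntegral_pos_of_pos_on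
    · exact (Complex.continuous_re.comp_continuousOn hφcont).intervalIntegrable
    · intro t ht
      apply re_gg_pos
      apply hmem
      rw [Set.uIcc_of_le (by norm_num : (0:ℝ) ≤ 1)]
      exact Set.mem_Icc_of_Ioo ht
    · norm_num
  rw [hre] at hrepos
  exact lt_irrefl 0 hrepos

/-! ### Main theorem -/

theorem BTB_gamma1_sharp :
    IsBTB f₁ ∧ tCoeff f₁ 2 = 1/4 ∧ ‖tCoeff f₁ 2 / 2‖ = 1/8 := by
  have hball : ∀ z : ℂ, z ∈ ball (0:ℂ) 1 → ‖z‖ < 1 := by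
    intro z hz
    rwa [mem_ball_zero_iff] at hz
  have hderiv : ∀ z ∈ ball (0:ℂ) 1, deriv f₁ z = gg z := fun z hz =>
    (f₁_hasDerivAt (hball z hz)).deriv
  have h0mem : (0:ℂ) ∈ ball (0:ℂ) 1 := mem_ball_self one_pos
  have hBTB : IsBTB f₁ := by
    refine ⟨?_, ?_, ?_, f₁_injOn, fun z => z, analyticOnNhd_id, rfl, ?_, ?_⟩
    · exact DifferentiableOn.analyticOnNhd
        (fun z hz => ((f₁_hasDerivAt (hball z hz)).differentiableAt).differentiableWithinAt)
        isOpen_ball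
    · simp [f₁]
    · rw [hderiv 0 h0mem, gg_zero]
    · intro z hz
      exact hball z hz
    · intro z hz
      rw [hderiv z hz, gg_eq]
  have hco : tCoeff f₁ 2 = 1/4 := by
    have hev : deriv f₁ =ᶠ[nhds (0:ℂ)] gg := by
      filter_upwards [Metric.ball_mem_nhds (0:ℂ) one_pos] with z hz
      exact hderiv z hz
    have h2 : iteratedDeriv 2 f₁ 0 = deriv (deriv f₁) 0 := by
      rw [iteratedDeriv_succ, iteratedDeriv_one]
    have h3 : deriv (deriv f₁) 0 = deriv gg 0 := hev.deriv_eq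
    have h4 : deriv gg 0 = dgg 0 := (hasDerivAt_gg (by simp)).deriv
    rw [tCoeff, h2, h3, h4, dgg_zero]
    norm_num [Nat.factorial]
  refine ⟨hBTB, hco, ?_⟩
  rw [hco]
  have h8 : (1/4 : ℂ) / 2 = (8:ℂ)⁻¹ := by norm_num
  rw [h8, norm_inv]
  norm_num
end

section
/- The function f_4 defined on the unit disk by f_4(z) = ∫₀^z (1 + tanh(t⁴))^{1/2} dt belongs to the class BT_B, and its fourth logarithmic coefficient γ_4 = (1/2)(a_5 − a_2·a_4 + a_2²·a_3 − a_3²/2 − a_2⁴/4) satisfies |γ_4| = 1/20 (its Taylor coefficients satisfy a_2 = a_3 = a_4 = 0 and a_5 = 1/10). Hence the bound |γ_4| ≤ 1/20 for the class BT_B is sharp. -/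
open Complex Metric

noncomputable def f₄ (z : ℂ) : ℂ :=
  ∫ t in (0:ℝ)..1, z * psqrt (1 + Complex.tanh (((t : ℂ) * z)^4))

lemma cosh_ne_zero'_s16 {w : ℂ} (hw : |w.im| < Real.pi / 2) : Complex.cosh w ≠ 0 := by
  intro h
  have h2 : Complex.exp (2 * w) = -1 := by
    have : Complex.exp w + Complex.exp (-w) = 0 := by
      unfold Complex.cosh at h
      field_simp at h
      linear_combination h
    have hmul : Complex.exp w * Complex.exp w + Complex.exp (-w) * Complex.exp w = 0 := by
      linear_combination Complex.exp w * this
    rw [← Complex.exp_add, ← Complex.exp_add] at hmul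
    simp at hmul
    rw [two_mul]
    linear_combination hmul
  have him0 : Real.exp ((2*w).re) * Real.sin ((2*w).im) = 0 := by
    rw [← Complex.exp_im, h2]; simp
  have him : Real.sin ((2*w).im) = 0 := by
    rcases mul_eq_zero.mp him0 with h' | h'
    · exact absurd h' (Real.exp_ne_zero _)
    · exact h'
  have h2im : (2*w).im = 2 * w.im := by simp [Complex.mul_im]
  have hlt : |(2*w).im| < Real.pi := by
    rw [h2im, abs_mul, _root_.abs_two]
    linarith [abs_nonneg w.im, abs_lt.mp hw]
  rw [Real.sin_eq_zero_iff_of_lt_of_lt (by linarith [abs_lt.mp hlt]) (by linarith [abs_lt.mp hlt])] at him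
  have hre := congrArg Complex.re h2
  rw [Complex.exp_re, him] at hre
  simp at hre
  nlinarith [Real.exp_pos ((2*w).re), Real.exp_pos (2*w.re), hre]

lemma one_add_exp_ne {w : ℂ} (hw : |w.im| < Real.pi / 2) : 1 + Complex.exp (-2 * w) ≠ 0 := by
  intro h
  apply cosh_ne_zero'_s16 hw
  unfold Complex.cosh
  have hexp : Complex.exp (-w) = Complex.exp (-2*w) * Complex.exp w := by
    rw [← Complex.exp_add]; ring_nf
  have h1 : Complex.exp (-2*w) = -1 := by linear_combination h
  rw [hexp, h1]; ring

lemma one_add_tanh_eq {w : ℂ} (hw : |w.im| < Real.pi / 2) :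
    1 + Complex.tanh w = 2 / (1 + Complex.exp (-2 * w)) := by
  have hc := cosh_ne_zero'_s16 hw
  have hden := one_add_exp_ne hw
  have hne : Complex.exp w ≠ 0 := Complex.exp_ne_zero w
  have hexp : Complex.exp (-w) = Complex.exp (-2*w) * Complex.exp w := by
    rw [← Complex.exp_add]; ring_nf
  have hcosh : Complex.cosh w = Complex.exp w * (1 + Complex.exp (-2*w)) / 2 := by
    unfold Complex.cosh; rw [hexp]; ring
  have h1 : 1 + Complex.tanh w = Complex.exp w / Complex.cosh w := by
    rw [Complex.tanh_eq_sinh_div_cosh, ← Complex.cosh_add_sinh w]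
    field_simp
  rw [h1, hcosh]
  rw [div_div_eq_mul_div, div_eq_div_iff (by simpa using And.intro hne hden) hden]
  ring

lemma one_add_tanh_slitPlane {w : ℂ} (hw : |w.im| < Real.pi / 2) :
    1 + Complex.tanh w ∈ Complex.slitPlane := by
  rw [one_add_tanh_eq hw, Complex.mem_slitPlane_iff]
  have hden := one_add_exp_ne hw
  by_cases hy : w.im = 0
  · left
    have h1 : Complex.exp (-2*w) = ((Real.exp (-2*w.re) : ℝ) : ℂ) := by
      rw [Complex.ofReal_exp]
      congr 1
      apply Complex.ext <;> simp [hy, Complex.mul_im, Complex.mul_re]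
    rw [h1]
    have h2 : (2 : ℂ) / (1 + ((Real.exp (-2*w.re) : ℝ) : ℂ))
        = (((2 / (1 + Real.exp (-2*w.re)) : ℝ) : ℝ) : ℂ) := by
      push_cast
      ring
    rw [h2, Complex.ofReal_re]
    positivity
  · right
    set u := 1 + Complex.exp (-2*w) with hu
    have huim : u.im ≠ 0 := by
      have hexpim : (Complex.exp (-2*w)).im = Real.exp ((-2*w).re) * Real.sin ((-2*w).im) :=
        Complex.exp_im _
      have h2im : (-2*w).im = -(2 * w.im) := by simp [Complex.mul_im]
      simp only [hu, Complex.add_im, Complex.one_im, zero_add, hexpim]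
      intro h
      rcases mul_eq_zero.mp h with h' | h'
      · exact absurd h' (Real.exp_ne_zero _)
      · rw [h2im] at h'
        have hlt : |(-(2*w.im))| < Real.pi := by
          rw [abs_neg, abs_mul, _root_.abs_two]
          linarith [abs_nonneg w.im, abs_lt.mp hw]
        rw [Real.sin_eq_zero_iff_of_lt_of_lt (by linarith [abs_lt.mp hlt]) (by linarith [abs_lt.mp hlt])] at h'
        apply hy; linarith
    have hnsq : (0:ℝ) < Complex.normSq u := Complex.normSq_pos.mpr hden
    rw [Complex.div_im]
    have h2re : (2:ℂ).re = 2 := by norm_num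
    have h2im0 : (2:ℂ).im = 0 := by norm_num
    rw [h2re, h2im0, zero_mul, zero_div, zero_sub, Ne, neg_eq_zero]
    intro h
    rcases div_eq_zero_iff.mp h with h' | h'
    · rcases mul_eq_zero.mp h' with h'' | h''
      · norm_num at h''
      · exact huim h''
    · linarith


lemma psqrt_one : psqrt 1 = 1 := by simp [psqrt]

lemma psqrt_re_pos {u : ℂ} (hu : u ∈ Complex.slitPlane) : 0 < (psqrt u).re := by
  rw [psqrt, Complex.exp_re]
  have him : ((1/2 : ℂ) * Complex.log u).im = u.arg / 2 := by
    simp [Complex.mul_im, Complex.log_im]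
    ring
  rw [him]
  have h1 : -(Real.pi/2) < u.arg / 2 := by linarith [Complex.neg_pi_lt_arg u]
  have h2 : u.arg / 2 < Real.pi/2 := by
    have := Complex.arg_le_pi u
    have hne := Complex.slitPlane_arg_ne_pi hu
    have : u.arg < Real.pi := lt_of_le_of_ne this hne
    linarith
  have := Real.cos_pos_of_mem_Ioo ⟨h1, h2⟩
  positivity

lemma hasDerivAt_tanh'_s16 {w : ℂ} (hc : Complex.cosh w ≠ 0) :
    HasDerivAt Complex.tanh (1 - Complex.tanh w ^ 2) w := by
  have h := (Complex.hasDerivAt_sinh w).div (Complex.hasDerivAt_cosh w) hc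
  have heq : (Complex.cosh w * Complex.cosh w - Complex.sinh w * Complex.sinh w) / Complex.cosh w ^ 2
      = 1 - Complex.tanh w ^ 2 := by
    rw [Complex.tanh_eq_sinh_div_cosh]
    field_simp
  rw [heq] at h
  exact h.congr_deriv rfl |>.congr_of_eventuallyEq (by
    filter_upwards with x
    rw [Complex.tanh_eq_sinh_div_cosh]; rfl)


noncomputable def Gf (w : ℂ) : ℂ := psqrt (1 + Complex.tanh (w^4))
noncomputable def Af (z : ℂ) : ℂ :=
  2 * Gf z * (1 - Complex.tanh (z^4)^2) / (1 + Complex.tanh (z^4))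

lemma mem_S_of_ball {z : ℂ} (hz : z ∈ ball (0:ℂ) 1) : |(z^4).im| < Real.pi / 2 := by
  have h1 : ‖z^4‖ < 1 := by
    rw [norm_pow]
    have hz1 : ‖z‖ < 1 := by simpa [Complex.dist_eq] using mem_ball.mp hz
    have h0 : (0:ℝ) ≤ ‖z‖ := norm_nonneg z
    nlinarith [pow_lt_one₀ h0 hz1 (by norm_num : (4:ℕ) ≠ 0)]
  have h2 := Complex.abs_im_le_norm (z^4)
  have hpi : (1:ℝ) < Real.pi / 2 := by linarith [Real.pi_gt_three]
  linarith

lemma hasDerivAt_Gf {z : ℂ} (hz : |(z^4).im| < Real.pi / 2) :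
    HasDerivAt Gf (z^3 * Af z) z := by
  set t := Complex.tanh (z^4) with ht
  have hslit := one_add_tanh_slitPlane hz
  have hne : 1 + t ≠ 0 := Complex.slitPlane_ne_zero hslit
  have h4 : HasDerivAt (fun z : ℂ => z^4) (4*z^3) z := by
    simpa using hasDerivAt_pow 4 z
  have htanh : HasDerivAt (fun z : ℂ => Complex.tanh (z^4)) ((1 - t^2) * (4*z^3)) z :=
    by have := (hasDerivAt_tanh'_s16 (cosh_ne_zero'_s16 hz)).comp z h4; exact this
  have hadd : HasDerivAt (fun z : ℂ => 1 + Complex.tanh (z^4)) ((1 - t^2) * (4*z^3)) z :=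
    htanh.const_add 1
  have hlog : HasDerivAt (fun z : ℂ => Complex.log (1 + Complex.tanh (z^4)))
      ((1 + t)⁻¹ * ((1 - t^2) * (4*z^3))) z :=
    by have := (Complex.hasDerivAt_log hslit).comp z hadd; exact this
  have hmul : HasDerivAt (fun z : ℂ => (1/2 : ℂ) * Complex.log (1 + Complex.tanh (z^4)))
      ((1/2 : ℂ) * ((1 + t)⁻¹ * ((1 - t^2) * (4*z^3)))) z := hlog.const_mul _
  have hexp : HasDerivAt Gf
      (Complex.exp ((1/2 : ℂ) * Complex.log (1 + t)) *
        ((1/2 : ℂ) * ((1 + t)⁻¹ * ((1 - t^2) * (4*z^3))))) z :=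
    (Complex.hasDerivAt_exp _).comp z hmul
  convert hexp using 1
  rw [Af]
  show z^3 * (2 * psqrt (1 + t) * (1 - t^2) / (1 + t)) = _
  rw [psqrt]
  field_simp
  ring


def Sset : Set ℂ := {z : ℂ | |(z^4).im| < Real.pi / 2}



lemma isOpen_S : IsOpen Sset := by
  have : Continuous fun z : ℂ => |(z^4).im| :=
    (Complex.continuous_im.comp (continuous_pow 4)).abs
  exact isOpen_lt this continuous_const

lemma ball_subset_S : ball (0:ℂ) 1 ⊆ Sset := fun z hz => mem_S_of_ball hz

lemma diffAt_tanh4 {z : ℂ} (hz : z ∈ Sset) :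
    DifferentiableAt ℂ (fun z : ℂ => Complex.tanh (z^4)) z := by
  have h4 : HasDerivAt (fun z : ℂ => z^4) (4*z^3) z := by simpa using hasDerivAt_pow 4 z
  exact ((hasDerivAt_tanh'_s16 (cosh_ne_zero'_s16 hz)).comp z h4).differentiableAt

lemma analyticOnNhd_Gf : AnalyticOnNhd ℂ Gf Sset := by
  have h : DifferentiableOn ℂ Gf Sset := fun z hz =>
    (hasDerivAt_Gf hz).differentiableAt.differentiableWithinAt
  exact h.analyticOnNhd isOpen_S

lemma analyticOnNhd_Af : AnalyticOnNhd ℂ Af Sset := by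
  apply DifferentiableOn.analyticOnNhd _ isOpen_S
  intro z hz
  have hne : 1 + Complex.tanh (z^4) ≠ 0 :=
    Complex.slitPlane_ne_zero (one_add_tanh_slitPlane hz)
  have hG := (hasDerivAt_Gf hz).differentiableAt
  have ht := diffAt_tanh4 hz
  exact (((hG.const_mul 2).mul ((differentiableAt_const 1).sub (ht.pow 2))).div
    ((differentiableAt_const 1).add ht) hne).differentiableWithinAt

lemma continuousOn_Gf : ContinuousOn Gf Sset := fun z hz =>
  ((hasDerivAt_Gf hz).differentiableAt.continuousAt).continuousWithinAt

set_option maxHeartbeats 1000000 in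
lemma hasDerivAt_f₄ {z : ℂ} (hz : z ∈ ball (0:ℂ) 1) : HasDerivAt f₄ (Gf z) z := by
  set F : ℂ → ℝ → ℂ := fun x t => x * Gf ((t:ℂ)*x) with hF
  set F' : ℂ → ℝ → ℂ := fun x t =>
    Gf ((t:ℂ)*x) + x * (((t:ℂ)*x)^3 * Af ((t:ℂ)*x) * (t:ℂ)) with hF'
  have hz1 : ‖z‖ < 1 := by simpa [Complex.dist_eq] using mem_ball.mp hz
  set ε : ℝ := (1 - ‖z‖)/2 with hε
  set r : ℝ := (1 + ‖z‖)/2 with hr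
  have hεpos : 0 < ε := by rw [hε]; linarith
  have hr1 : r < 1 := by rw [hr]; linarith
  have habs : ∀ x ∈ ball z ε, ‖x‖ < r := by
    intro x hx
    have := mem_ball.mp hx
    rw [Complex.dist_eq] at this
    calc ‖x‖ = ‖x - z + z‖ := by ring_nf
    _ ≤ ‖x - z‖ + ‖z‖ := norm_add_le _ _
    _ < ε + ‖z‖ := by linarith
    _ = r := by rw [hε, hr]; ring
  have hmem : ∀ (t : ℝ), |t| ≤ 1 → ∀ (x : ℂ), ‖x‖ < 1 → ((t:ℂ)*x) ∈ ball (0:ℂ) 1 := by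
    intro t ht x hx
    rw [mem_ball, Complex.dist_eq, sub_zero, norm_mul, Complex.norm_real, Real.norm_eq_abs]
    nlinarith [norm_nonneg x, abs_nonneg t]
  -- continuity helper
  have hcont : ∀ (x : ℂ), ‖x‖ < 1 → ContinuousOn (fun t : ℝ => F x t) (Set.uIcc 0 1) := by
    intro x hx
    intro t ht
    rw [Set.uIcc_of_le (by norm_num : (0:ℝ) ≤ 1)] at ht
    have htx : ((t:ℂ)*x) ∈ ball (0:ℂ) 1 :=
      hmem t (abs_le.mpr ⟨by linarith [ht.1], ht.2⟩) x hx
    have h1 : ContinuousAt (fun t : ℝ => (t:ℂ)*x) t :=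
      (Complex.continuous_ofReal.mul continuous_const).continuousAt
    have h1b : ContinuousAt (Gf ∘ fun t : ℝ => (t:ℂ)*x) t :=
      ContinuousAt.comp ((hasDerivAt_Gf (mem_S_of_ball htx)).differentiableAt.continuousAt) h1
    have h2 : ContinuousAt (fun t : ℝ => F x t) t := continuousAt_const.mul h1b
    exact h2.continuousWithinAt
  have hball_S : ball (0:ℂ) 1 ⊆ Sset := fun w hw => mem_S_of_ball hw
  have hKsub : closedBall (0:ℂ) r ⊆ ball (0:ℂ) 1 := by
    intro w hw
    rw [mem_closedBall, Complex.dist_eq, sub_zero] at hw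
    rw [mem_ball, Complex.dist_eq, sub_zero]
    linarith
  -- continuity of F' x
  have hcont' : ∀ (x : ℂ), ‖x‖ < 1 → ContinuousOn (fun t : ℝ => F' x t) (Set.uIcc 0 1) := by
    intro x hx t ht
    rw [Set.uIcc_of_le (by norm_num : (0:ℝ) ≤ 1)] at ht
    have htx : ((t:ℂ)*x) ∈ ball (0:ℂ) 1 :=
      hmem t (abs_le.mpr ⟨by linarith [ht.1], ht.2⟩) x hx
    have h1 : ContinuousAt (fun t : ℝ => (t:ℂ)*x) t :=
      (Complex.continuous_ofReal.mul continuous_const).continuousAt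
    have hGc : ContinuousAt (Gf ∘ fun t : ℝ => (t:ℂ)*x) t :=
      ContinuousAt.comp ((hasDerivAt_Gf (mem_S_of_ball htx)).differentiableAt.continuousAt) h1
    have hAc : ContinuousAt (Af ∘ fun t : ℝ => (t:ℂ)*x) t :=
      ContinuousAt.comp (analyticOnNhd_Af.continuousOn.continuousAt (isOpen_S.mem_nhds (hball_S htx))) h1
    have h2 : ContinuousAt (fun t : ℝ => F' x t) t := by
      exact hGc.add (continuousAt_const.mul (((h1.pow 3).mul hAc).mul
        Complex.continuous_ofReal.continuousAt))
    exact h2.continuousWithinAt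
  -- bounds via compactness
  obtain ⟨M₁, hM₁⟩ : ∃ M, ∀ w ∈ closedBall (0:ℂ) r, ‖Gf w‖ ≤ M :=
    (isCompact_closedBall 0 r).exists_bound_of_continuousOn
      (continuousOn_Gf.mono (fun w hw => hball_S (hKsub hw)))
  obtain ⟨M₂, hM₂⟩ : ∃ M, ∀ w ∈ closedBall (0:ℂ) r, ‖w^3 * Af w‖ ≤ M :=
    (isCompact_closedBall 0 r).exists_bound_of_continuousOn
      (((continuous_pow 3).continuousOn).mul
        (analyticOnNhd_Af.continuousOn.mono (fun w hw => hball_S (hKsub hw))))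
  have hIoc : Set.uIoc (0:ℝ) 1 = Set.Ioc 0 1 := Set.uIoc_of_le (by norm_num)
  have hsub : Set.uIoc (0:ℝ) 1 ⊆ Set.uIcc (0:ℝ) 1 := by
    rw [hIoc, Set.uIcc_of_le (by norm_num : (0:ℝ) ≤ 1)]
    exact Set.Ioc_subset_Icc_self
  have key := intervalIntegral.hasDerivAt_integral_of_dominated_loc_of_deriv_le
    (F := F) (F' := F') (x₀ := z) (a := 0) (b := 1) (μ := MeasureTheory.volume)
    (bound := fun _ => M₁ + M₂) (ball_mem_nhds z hεpos)
    (by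
      filter_upwards [ball_mem_nhds z hεpos] with x hx
      have hx1 : ‖x‖ < 1 := lt_trans (habs x hx) hr1
      exact ((hcont x hx1).mono hsub).aestronglyMeasurable measurableSet_uIoc)
    ((hcont z hz1).intervalIntegrable)
    (((hcont' z hz1).mono hsub).aestronglyMeasurable measurableSet_uIoc)
    (by
      apply MeasureTheory.ae_of_all
      intro t ht x hx
      rw [hIoc] at ht
      have htabs : |t| ≤ 1 := abs_le.mpr ⟨by linarith [ht.1], ht.2⟩
      have hxr : ‖x‖ < r := habs x hx
      have htxK : ((t:ℂ)*x) ∈ closedBall (0:ℂ) r := by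
        rw [mem_closedBall, Complex.dist_eq, sub_zero, norm_mul, Complex.norm_real, Real.norm_eq_abs]
        nlinarith [norm_nonneg x, abs_nonneg t]
      have hb1 := hM₁ _ htxK
      have hb2 := hM₂ _ htxK
      show ‖F' x t‖ ≤ M₁ + M₂
      have : ‖F' x t‖ ≤ ‖Gf ((t:ℂ)*x)‖ + ‖x‖ * (‖((t:ℂ)*x)^3 * Af ((t:ℂ)*x)‖ * ‖(t:ℂ)‖) := by
        refine le_trans (norm_add_le _ _) ?_
        rw [norm_mul, mul_assoc]
        apply add_le_add le_rfl
        apply mul_le_mul_of_nonneg_left _ (norm_nonneg x)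
        rw [← norm_mul, mul_assoc]
      refine le_trans this ?_
      have hx1 : ‖x‖ ≤ 1 := le_of_lt (lt_trans hxr hr1)
      have ht1 : ‖(t:ℂ)‖ ≤ 1 := by rwa [Complex.norm_real, Real.norm_eq_abs]
      have h2nn : (0:ℝ) ≤ ‖((t:ℂ)*x)^3 * Af ((t:ℂ)*x)‖ := norm_nonneg _
      have e1 : ‖((t:ℂ)*x)^3 * Af ((t:ℂ)*x)‖ * ‖(t:ℂ)‖ ≤ M₂ := by
        nlinarith [norm_nonneg ((t:ℂ))]
      have e2 : ‖x‖ * (‖((t:ℂ)*x)^3 * Af ((t:ℂ)*x)‖ * ‖(t:ℂ)‖) ≤ M₂ := by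
        nlinarith [norm_nonneg x, mul_nonneg h2nn (norm_nonneg ((t:ℂ)))]
      linarith)
    intervalIntegrable_const
    (by
      apply MeasureTheory.ae_of_all
      intro t ht x hx
      rw [hIoc] at ht
      have htabs : |t| ≤ 1 := abs_le.mpr ⟨by linarith [ht.1], ht.2⟩
      have hx1 : ‖x‖ < 1 := lt_trans (habs x hx) hr1
      have htx : ((t:ℂ)*x) ∈ ball (0:ℂ) 1 := hmem t htabs x hx1
      have hinner : HasDerivAt (fun x : ℂ => (t:ℂ)*x) (t:ℂ) x := by
        simpa using (hasDerivAt_id x).const_mul (t:ℂ)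
      have hGcomp : HasDerivAt (fun x : ℂ => Gf ((t:ℂ)*x))
          ((((t:ℂ)*x)^3 * Af ((t:ℂ)*x)) * (t:ℂ)) x :=
        (hasDerivAt_Gf (mem_S_of_ball htx)).comp x hinner
      have h := (hasDerivAt_id x).mul hGcomp
      have he : F' x t = 1 * Gf ((t:ℂ)*x) + x * ((((t:ℂ)*x)^3 * Af ((t:ℂ)*x)) * (t:ℂ)) := by
        show Gf ((t:ℂ)*x) + x * (((t:ℂ)*x)^3 * Af ((t:ℂ)*x) * (t:ℂ)) = _
        ring
      rw [he]
      exact h)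
  -- identify the integral of F' z with Gf z
  have hFTC : (∫ t in (0:ℝ)..1, F' z t) = Gf z := by
    have hder : ∀ t ∈ Set.uIcc (0:ℝ) 1,
        HasDerivAt (fun t : ℝ => (t:ℂ) * Gf ((t:ℂ)*z)) (F' z t) t := by
      intro t ht
      rw [Set.uIcc_of_le (by norm_num : (0:ℝ) ≤ 1)] at ht
      have htabs : |t| ≤ 1 := abs_le.mpr ⟨by linarith [ht.1], ht.2⟩
      have htz : ((t:ℂ)*z) ∈ ball (0:ℂ) 1 := hmem t htabs z hz1
      have hinner : HasDerivAt (fun u : ℂ => u*z) ((1:ℂ)*z) (t:ℂ) :=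
        (hasDerivAt_id ((t:ℂ))).mul_const z
      rw [one_mul] at hinner
      have hGcomp : HasDerivAt (fun u : ℂ => Gf (u*z))
          ((((t:ℂ)*z)^3 * Af ((t:ℂ)*z)) * z) (t:ℂ) :=
        by have := (hasDerivAt_Gf (mem_S_of_ball htz)).comp ((t:ℂ)) hinner; exact this
      have hψ := (hasDerivAt_id ((t:ℂ))).mul hGcomp
      have hφ := hψ.comp_ofReal
      convert hφ using 1
      show Gf ((t:ℂ)*z) + z * (((t:ℂ)*z)^3 * Af ((t:ℂ)*z) * (t:ℂ)) = _
      simp only [id_eq]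
      ring
      rfl
    have := intervalIntegral.integral_eq_sub_of_hasDerivAt hder key.1
    rw [this]
    push_cast
    simp
  have hmain := key.2
  rw [hFTC] at hmain
  exact hmain



lemma Gf_zero : Gf 0 = 1 := by
  simp [Gf, psqrt, Complex.tanh_zero]

lemma f₄_zero : f₄ 0 = 0 := by
  simp [f₄]

lemma deriv_f₄ {z : ℂ} (hz : z ∈ ball (0:ℂ) 1) : deriv f₄ z = Gf z :=
  (hasDerivAt_f₄ hz).deriv

lemma Gf_re_pos {z : ℂ} (hz : z ∈ ball (0:ℂ) 1) : 0 < (Gf z).re :=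
  psqrt_re_pos (one_add_tanh_slitPlane (mem_S_of_ball hz))

lemma analyticOnNhd_f₄ : AnalyticOnNhd ℂ f₄ (ball 0 1) := by
  have h : DifferentiableOn ℂ f₄ (ball 0 1) := fun z hz =>
    (hasDerivAt_f₄ hz).differentiableAt.differentiableWithinAt
  exact h.analyticOnNhd isOpen_ball

lemma injOn_f₄ : Set.InjOn f₄ (ball 0 1) := by
  intro a ha b hb hab
  by_contra hne
  have hba : b - a ≠ 0 := sub_ne_zero.mpr (Ne.symm hne)
  set γ : ℝ → ℂ := fun t => a + (t:ℂ)*(b-a) with hγ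
  have hc : ∀ t : ℝ, t ∈ Set.uIcc (0:ℝ) 1 → γ t ∈ ball (0:ℂ) 1 := by
    intro t ht
    rw [Set.uIcc_of_le (by norm_num : (0:ℝ) ≤ 1)] at ht
    have hcv := (convex_ball (0:ℂ) 1) ha hb (by linarith [ht.2] : (0:ℝ) ≤ 1 - t) ht.1
      (by ring : (1 - t) + t = 1)
    have : γ t = (1-t) • a + t • b := by
      rw [hγ]
      simp only [Complex.real_smul]
      push_cast
      ring
    rw [this]
    exact hcv
  have hder : ∀ t ∈ Set.uIcc (0:ℝ) 1,
      HasDerivAt (fun t : ℝ => f₄ (γ t)) ((b-a) * Gf (γ t)) t := by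
    intro t ht
    have hin : HasDerivAt (fun u : ℂ => a + u*(b-a)) ((1:ℂ)*(b-a)) (t:ℂ) :=
      ((hasDerivAt_id ((t:ℂ))).mul_const (b-a)).const_add a
    rw [one_mul] at hin
    have hout : HasDerivAt f₄ (Gf (γ t)) (a + (t:ℂ)*(b-a)) := hasDerivAt_f₄ (hc t ht)
    have hcomp := (hout.comp ((t:ℂ)) hin).comp_ofReal
    convert hcomp using 1
    · rfl
    · ring
  have hcontGf : ContinuousOn (fun t : ℝ => Gf (γ t)) (Set.uIcc 0 1) := by
    intro t ht
    have h1 : ContinuousAt γ t :=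
      (continuous_const.add (Complex.continuous_ofReal.mul continuous_const)).continuousAt
    have h2 : ContinuousAt (Gf ∘ γ) t :=
      ContinuousAt.comp ((hasDerivAt_Gf (mem_S_of_ball (hc t ht))).differentiableAt.continuousAt) h1
    exact h2.continuousWithinAt
  have hint : IntervalIntegrable (fun t : ℝ => (b-a) * Gf (γ t)) MeasureTheory.volume 0 1 :=
    (continuousOn_const.mul hcontGf).intervalIntegrable
  have hFTC := intervalIntegral.integral_eq_sub_of_hasDerivAt hder hint
  have hγ1 : γ 1 = b := by rw [hγ]; push_cast; ring
  have hγ0 : γ 0 = a := by rw [hγ]; push_cast; ring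
  rw [hγ1, hγ0, hab, sub_self] at hFTC
  rw [intervalIntegral.integral_const_mul] at hFTC
  have hI : (∫ t in (0:ℝ)..1, Gf (γ t)) = 0 := by
    rcases mul_eq_zero.mp hFTC with h | h
    · exact absurd h hba
    · exact h
  have hint2 : IntervalIntegrable (fun t : ℝ => Gf (γ t)) MeasureTheory.volume 0 1 :=
    hcontGf.intervalIntegrable
  have hre : (∫ t in (0:ℝ)..1, (Gf (γ t)).re) = 0 := by
    have := Complex.reCLM.intervalIntegral_comp_comm hint2
    simp only [Complex.reCLM_apply] at this
    rw [this, hI]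
    simp
  have hpos : 0 < ∫ t in (0:ℝ)..1, (Gf (γ t)).re := by
    apply intervalIntegral.intervalIntegral_pos_of_pos_on
    · exact (Complex.continuous_re.comp_continuousOn hcontGf).intervalIntegrable
    · intro t ht
      exact Gf_re_pos (hc t (by
        rw [Set.uIcc_of_le (by norm_num : (0:ℝ) ≤ 1)]
        exact ⟨le_of_lt ht.1, le_of_lt ht.2⟩))
    · norm_num
  rw [hre] at hpos
  exact lt_irrefl 0 hpos


noncomputable def Pf (z : ℂ) : ℂ := z^3 * Af z
noncomputable def dPf (z : ℂ) : ℂ := 3*z^2*Af z + z^3*deriv Af z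
noncomputable def d2Pf (z : ℂ) : ℂ := 6*z*Af z + 6*z^2*deriv Af z + z^3*deriv (deriv Af) z

lemma Af_zero : Af 0 = 2 := by
  rw [Af]
  norm_num [Complex.tanh_zero, Gf_zero]

lemma memS {z : ℂ} (hz : z ∈ ball (0:ℂ) 1) : z ∈ Sset := mem_S_of_ball hz

lemma hAf {z : ℂ} (hz : z ∈ ball (0:ℂ) 1) : DifferentiableAt ℂ Af z :=
  (analyticOnNhd_Af z (memS hz)).differentiableAt

lemma hAf' {z : ℂ} (hz : z ∈ ball (0:ℂ) 1) : DifferentiableAt ℂ (deriv Af) z :=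
  (analyticOnNhd_Af.deriv z (memS hz)).differentiableAt

lemma hAf'' {z : ℂ} (hz : z ∈ ball (0:ℂ) 1) : DifferentiableAt ℂ (deriv (deriv Af)) z :=
  (analyticOnNhd_Af.deriv.deriv z (memS hz)).differentiableAt

lemma hball : ball (0:ℂ) 1 ∈ nhds (0:ℂ) := ball_mem_nhds 0 one_pos

lemma hasDerivAt_Pf {z : ℂ} (hz : z ∈ ball (0:ℂ) 1) : HasDerivAt Pf (dPf z) z := by
  apply ((hasDerivAt_pow 3 z).mul (hAf hz).hasDerivAt).congr_deriv
  show _ = dPf z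
  rw [dPf]
  push_cast
  ring

lemma hasDerivAt_dPf {z : ℂ} (hz : z ∈ ball (0:ℂ) 1) : HasDerivAt dPf (d2Pf z) z := by
  have h1 : HasDerivAt (fun z : ℂ => 3*z^2*Af z) (3*(2*z)*Af z + 3*z^2*deriv Af z) z := by
    apply (((hasDerivAt_pow 2 z).const_mul 3).mul (hAf hz).hasDerivAt).congr_deriv
    push_cast
    ring
  have h2 : HasDerivAt (fun z : ℂ => z^3*deriv Af z) (3*z^2*deriv Af z + z^3*deriv (deriv Af) z) z := by
    apply ((hasDerivAt_pow 3 z).mul (hAf' hz).hasDerivAt).congr_deriv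
    push_cast
    ring
  apply (h1.add h2).congr_deriv
  show _ = d2Pf z
  rw [d2Pf]
  ring

lemma deriv_d2Pf_zero : deriv d2Pf 0 = 12 := by
  have h1 : HasDerivAt (fun z : ℂ => 6*z*Af z) (6*Af 0 + 6*0*deriv Af 0) 0 := by
    apply (((hasDerivAt_id (0:ℂ)).const_mul 6).mul (hAf (mem_ball_self one_pos)).hasDerivAt).congr_deriv
    simp
  have h2 : HasDerivAt (fun z : ℂ => 6*z^2*deriv Af z) (0:ℂ) 0 := by
    apply (((hasDerivAt_pow 2 (0:ℂ)).const_mul 6).mul (hAf' (mem_ball_self one_pos)).hasDerivAt).congr_deriv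
    simp
  have h3 : HasDerivAt (fun z : ℂ => z^3*deriv (deriv Af) z) (0:ℂ) 0 := by
    apply ((hasDerivAt_pow 3 (0:ℂ)).mul (hAf'' (mem_ball_self one_pos)).hasDerivAt).congr_deriv
    simp
  have h := (h1.add h2).add h3
  have heq : HasDerivAt d2Pf (6*Af 0 + 6*0*deriv Af 0 + 0 + 0) 0 := by
    apply h.congr_of_eventuallyEq
    filter_upwards with z
    rw [d2Pf]; rfl
  have : deriv d2Pf 0 = 6*Af 0 + 6*0*deriv Af 0 + 0 + 0 := heq.deriv
  rw [this, Af_zero]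
  ring

-- eventual equalities
lemma ev1 : deriv f₄ =ᶠ[nhds (0:ℂ)] Gf := by
  filter_upwards [hball] with z hz
  exact (hasDerivAt_f₄ hz).deriv

lemma ev2 : deriv Gf =ᶠ[nhds (0:ℂ)] Pf := by
  filter_upwards [hball] with z hz
  exact (hasDerivAt_Gf (mem_S_of_ball hz)).deriv

lemma ev3 : deriv Pf =ᶠ[nhds (0:ℂ)] dPf := by
  filter_upwards [hball] with z hz
  exact (hasDerivAt_Pf hz).deriv

lemma ev4 : deriv dPf =ᶠ[nhds (0:ℂ)] d2Pf := by
  filter_upwards [hball] with z hz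
  exact (hasDerivAt_dPf hz).deriv

lemma itf₄ (n : ℕ) : iteratedDeriv (n+1) f₄ 0 = iteratedDeriv n Gf 0 := by
  rw [iteratedDeriv_succ']
  exact Filter.EventuallyEq.iteratedDeriv_eq n ev1

lemma itGf (n : ℕ) : iteratedDeriv (n+1) Gf 0 = iteratedDeriv n Pf 0 := by
  rw [iteratedDeriv_succ']
  exact Filter.EventuallyEq.iteratedDeriv_eq n ev2

lemma itPf (n : ℕ) : iteratedDeriv (n+1) Pf 0 = iteratedDeriv n dPf 0 := by
  rw [iteratedDeriv_succ']
  exact Filter.EventuallyEq.iteratedDeriv_eq n ev3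

lemma itdPf (n : ℕ) : iteratedDeriv (n+1) dPf 0 = iteratedDeriv n d2Pf 0 := by
  rw [iteratedDeriv_succ']
  exact Filter.EventuallyEq.iteratedDeriv_eq n ev4

lemma tCoeff2 : tCoeff f₄ 2 = 0 := by
  have : iteratedDeriv 2 f₄ 0 = iteratedDeriv 0 Pf 0 := by
    rw [itf₄ 1, itGf 0]
  rw [tCoeff, this, iteratedDeriv_zero]
  simp [Pf]

lemma tCoeff3 : tCoeff f₄ 3 = 0 := by
  have : iteratedDeriv 3 f₄ 0 = iteratedDeriv 0 dPf 0 := by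
    rw [itf₄ 2, itGf 1, itPf 0]
  rw [tCoeff, this, iteratedDeriv_zero]
  simp [dPf]

lemma tCoeff4 : tCoeff f₄ 4 = 0 := by
  have : iteratedDeriv 4 f₄ 0 = iteratedDeriv 0 d2Pf 0 := by
    rw [itf₄ 3, itGf 2, itPf 1, itdPf 0]
  rw [tCoeff, this, iteratedDeriv_zero]
  simp [d2Pf]

lemma tCoeff5 : tCoeff f₄ 5 = 1/10 := by
  have : iteratedDeriv 5 f₄ 0 = iteratedDeriv 1 d2Pf 0 := by
    rw [itf₄ 4, itGf 3, itPf 2, itdPf 1]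
  rw [tCoeff, this, iteratedDeriv_one, deriv_d2Pf_zero]
  rw [show (Nat.factorial 5) = 120 by rfl]
  norm_num

lemma deriv_f₄_zero : deriv f₄ 0 = 1 := by
  rw [deriv_f₄ (mem_ball_self one_pos), Gf_zero]

lemma isBTB_f₄ : IsBTB f₄ := by
  refine ⟨analyticOnNhd_f₄, f₄_zero, deriv_f₄_zero, injOn_f₄, fun z => z^4, ?_, by norm_num, ?_, ?_⟩
  · intro z _
    exact (analyticAt_id (𝕜 := ℂ) (z := z)).pow 4
  · intro z hz
    have hz1 : ‖z‖ < 1 := by simpa [Complex.dist_eq] using mem_ball.mp hz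
    rw [norm_pow]
    exact pow_lt_one₀ (norm_nonneg z) hz1 (by norm_num)
  · intro z hz
    exact deriv_f₄ hz

theorem BTB_gamma4_sharp :
    IsBTB f₄ ∧ tCoeff f₄ 2 = 0 ∧ tCoeff f₄ 3 = 0 ∧ tCoeff f₄ 4 = 0 ∧ tCoeff f₄ 5 = 1/10 ∧
      ‖(1/2) * (tCoeff f₄ 5 - tCoeff f₄ 2 * tCoeff f₄ 4
        + (tCoeff f₄ 2)^2 * tCoeff f₄ 3 - (tCoeff f₄ 3)^2 / 2 - (tCoeff f₄ 2)^4 / 4)‖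
        = 1/20 := by
  refine ⟨isBTB_f₄, tCoeff2, tCoeff3, tCoeff4, tCoeff5, ?_⟩
  rw [tCoeff2, tCoeff3, tCoeff4, tCoeff5]
  have h : ((1:ℂ)/2) * (1/10 - 0 * 0 + 0^2 * 0 - 0^2/2 - 0^4/4) = ((1/20 : ℝ) : ℂ) := by
    norm_num
  rw [h, Complex.norm_real, Real.norm_eq_abs]
  norm_num
end
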